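/- arXiv:1909.11769 — 8 statements merged into one kernel-verified Lean document; each statement's English description precedes it below -/
import Mathlib

section
/- For X, Y positive semi-definite D×D trace-one matrices, m(X,Y)·m(Y,X) = 1 if and only if X = Y. -/
open Matrix
open scoped ComplexOrder

/-- `m(X,Y) = sup {λ : X - λY ⪰ 0}`. -/
noncomputable def mfun {D : ℕ} (X Y : Matrix (Fin D) (Fin D) ℂ) : ℝ :=
  sSup {l : ℝ | (X - l • Y).PosSemidef}

lemma trace_nonneg_of_psd {D : ℕ} {A : Matrix (Fin D) (Fin D) ℂ}
    (h : A.PosSemidef) : 0 ≤ A.trace := by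
  rw [Matrix.trace]
  refine Finset.sum_nonneg fun i _ => ?_
  simpa [Matrix.mulVec_single, dotProduct, Pi.single_apply,
    Finset.sum_ite_eq] using h.dotProduct_mulVec_nonneg (Pi.single i 1)

lemma mem_le_one {D : ℕ} {X Y : Matrix (Fin D) (Fin D) ℂ}
    (hXt : X.trace = 1) (hYt : Y.trace = 1) {l : ℝ}
    (hl : (X - l • Y).PosSemidef) : l ≤ 1 := by
  have h := trace_nonneg_of_psd hl
  rw [Matrix.trace_sub, Matrix.trace_smul, hXt, hYt] at h
  have h' : (0 : ℂ) ≤ ((1 - l : ℝ) : ℂ) := by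
    simpa [Complex.real_smul] using h
  rw [Complex.zero_le_real] at h'
  linarith

lemma smul_psd {D : ℕ} {A : Matrix (Fin D) (Fin D) ℂ} {c : ℝ}
    (hc : 0 ≤ c) (hA : A.PosSemidef) : (c • A).PosSemidef := by
  rw [Matrix.posSemidef_iff_dotProduct_mulVec]
  constructor
  · unfold Matrix.IsHermitian
    rw [Matrix.conjTranspose_smul, hA.1.eq]
    norm_num
  · intro x
    have h := hA.dotProduct_mulVec_nonneg x
    have : star x ⬝ᵥ ((c • A) *ᵥ x) = c • (star x ⬝ᵥ (A *ᵥ x)) := by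
      rw [Matrix.smul_mulVec, dotProduct_smul]
    rw [this, Complex.real_smul]
    exact mul_nonneg (by exact_mod_cast Complex.zero_le_real.mpr hc) h

lemma mfun_self {D : ℕ} {X : Matrix (Fin D) (Fin D) ℂ}
    (hX : X.PosSemidef) (hXt : X.trace = 1) : mfun X X = 1 := by
  have hset : {l : ℝ | (X - l • X).PosSemidef} = Set.Iic 1 := by
    ext l
    simp only [Set.mem_setOf_eq, Set.mem_Iic]
    constructor
    · exact fun h => mem_le_one hXt hXt h
    · intro hl
      have : X - l • X = (1 - l) • X := by
        rw [sub_smul, one_smul]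
      rw [this]
      exact smul_psd (by linarith) hX
  rw [mfun, hset, csSup_Iic]

lemma sub_psd_of_mfun_eq_one {D : ℕ} {X Y : Matrix (Fin D) (Fin D) ℂ}
    (hX : X.PosSemidef) (hY : Y.PosSemidef)
    (hXt : X.trace = 1) (hYt : Y.trace = 1)
    (hm : mfun X Y = 1) : (X - Y).PosSemidef := by
  set S := {l : ℝ | (X - l • Y).PosSemidef} with hS
  have hne : S.Nonempty := ⟨0, by simpa [hS] using hX⟩
  have key : ∀ ε : ℝ, 0 < ε → ∃ l, (X - l • Y).PosSemidef ∧ 1 - ε < l := by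
    intro ε hε
    have : (1 - ε : ℝ) < sSup S := by rw [← mfun, hm] at *; linarith
    obtain ⟨l, hl, hl'⟩ := exists_lt_of_lt_csSup hne this
    exact ⟨l, hl, hl'⟩
  rw [Matrix.posSemidef_iff_dotProduct_mulVec]
  constructor
  · exact hX.1.sub hY.1
  · intro x
    set a : ℂ := star x ⬝ᵥ (X *ᵥ x) with ha
    set b : ℂ := star x ⬝ᵥ (Y *ᵥ x) with hb
    have hgoal : star x ⬝ᵥ ((X - Y) *ᵥ x) = a - b := by
      rw [Matrix.sub_mulVec, dotProduct_sub]
    rw [hgoal]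
    have hb0 : (0 : ℂ) ≤ b := hY.dotProduct_mulVec_nonneg x
    have hbre1 : 0 ≤ b.re := by simpa using (Complex.le_def.mp hb0).1
    have hbre2 : b.im = 0 := by simpa using (Complex.le_def.mp hb0).2.symm
    have hq : ∀ ε : ℝ, 0 < ε → 0 ≤ a - b + (ε : ℂ) * b := by
      intro ε hε
      obtain ⟨l, hl, hl'⟩ := key ε hε
      have h1 : (0 : ℂ) ≤ a - (l : ℂ) * b := by
        have := hl.dotProduct_mulVec_nonneg x
        have heq : star x ⬝ᵥ ((X - l • Y) *ᵥ x) = a - (l : ℂ) * b := by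
          rw [Matrix.sub_mulVec, dotProduct_sub, Matrix.smul_mulVec,
            dotProduct_smul, Complex.real_smul]
        rwa [heq] at this
      -- a - b + ε b = (a - l b) + (l - 1 + ε) b
      have h2 : a - b + (ε : ℂ) * b = (a - (l : ℂ) * b) + ((l - 1 + ε : ℝ) : ℂ) * b := by
        push_cast
        ring
      rw [h2]
      have h3 : (0 : ℂ) ≤ ((l - 1 + ε : ℝ) : ℂ) * b :=
        mul_nonneg (Complex.zero_le_real.mpr (by linarith)) hb0
      exact add_nonneg h1 h3
    -- take limit ε → 0
    rw [Complex.le_def, Complex.zero_re, Complex.zero_im]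
    have him : (a - b).im = 0 := by
      have h4 := (Complex.le_def.mp (hq 1 one_pos)).2
      simp only [Complex.zero_im, Complex.add_im, Complex.sub_im, Complex.mul_im,
        Complex.ofReal_re, Complex.ofReal_im, zero_mul, add_zero, one_mul] at h4
      simp only [Complex.sub_im]
      linarith
    refine ⟨?_, him.symm⟩
    by_contra hcon
    push_neg at hcon
    set r := (a - b).re with hr
    have hbp : (0:ℝ) < b.re + 1 := by linarith
    have hε : (0 : ℝ) < -r / (b.re + 1) := div_pos (by linarith) hbp
    have h5 := (Complex.le_def.mp (hq _ hε)).1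
    simp only [Complex.zero_re, Complex.add_re, Complex.mul_re, Complex.ofReal_re,
      Complex.ofReal_im, zero_mul, sub_zero, hbre2, mul_zero] at h5
    -- h5 : 0 ≤ (a - b).re + -r / (b.re + 1) * b.re
    have hlt : b.re / (b.re + 1) < 1 := by rw [div_lt_one hbp]; linarith
    have heq : -r / (b.re + 1) * b.re = (-r) * (b.re / (b.re + 1)) := by ring
    rw [heq, ← hr] at h5
    nlinarith [mul_lt_mul_of_pos_left hlt (show (0:ℝ) < -r by linarith)]

lemma psd_antisymm {D : ℕ} {A B : Matrix (Fin D) (Fin D) ℂ}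
    (h1 : (A - B).PosSemidef) (h2 : (B - A).PosSemidef) : A = B := by
  have hz : ∀ x : Fin D → ℂ, (A - B) *ᵥ x = 0 := by
    intro x
    rw [← h1.dotProduct_mulVec_zero_iff x]
    have p1 := h1.dotProduct_mulVec_nonneg x
    have p2 := h2.dotProduct_mulVec_nonneg x
    have hneg : B - A = -(A - B) := (neg_sub A B).symm
    rw [hneg, Matrix.neg_mulVec, dotProduct_neg] at p2
    have : star x ⬝ᵥ ((A - B) *ᵥ x) ≤ 0 := by
      rwa [← neg_nonneg]
    exact le_antisymm this p1
  have : A - B = 0 := by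
    ext i j
    have := congrFun (hz (Pi.single j 1)) i
    simpa [Matrix.mulVec_single] using this
  have := sub_eq_zero.mp this
  exact this

theorem stmt2 {D : ℕ} (X Y : Matrix (Fin D) (Fin D) ℂ)
    (hX : X.PosSemidef) (hY : Y.PosSemidef)
    (hXt : X.trace = 1) (hYt : Y.trace = 1) :
    mfun X Y * mfun Y X = 1 ↔ X = Y := by
  constructor
  · intro h
    -- bounds
    have hne1 : {l : ℝ | (X - l • Y).PosSemidef}.Nonempty := ⟨0, by simpa using hX⟩
    have hne2 : {l : ℝ | (Y - l • X).PosSemidef}.Nonempty := ⟨0, by simpa using hY⟩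
    have hbdd1 : BddAbove {l : ℝ | (X - l • Y).PosSemidef} :=
      ⟨1, fun l hl => mem_le_one hXt hYt hl⟩
    have hbdd2 : BddAbove {l : ℝ | (Y - l • X).PosSemidef} :=
      ⟨1, fun l hl => mem_le_one hYt hXt hl⟩
    have h1le : mfun X Y ≤ 1 := csSup_le hne1 fun l hl => mem_le_one hXt hYt hl
    have h2le : mfun Y X ≤ 1 := csSup_le hne2 fun l hl => mem_le_one hYt hXt hl
    have h1ge : 0 ≤ mfun X Y := le_csSup hbdd1 (by simpa using hX)
    have h2ge : 0 ≤ mfun Y X := le_csSup hbdd2 (by simpa using hY)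
    have e1 : mfun X Y = 1 := by nlinarith
    have e2 : mfun Y X = 1 := by nlinarith
    exact psd_antisymm (sub_psd_of_mfun_eq_one hX hY hXt hYt e1)
      (sub_psd_of_mfun_eq_one hY hX hYt hXt e2)
  · intro h
    subst h
    rw [mfun_self hX hXt]
    norm_num
end

section
/- The function d₀(X,Y) = -log m(X,Y) - log m(Y,X) is a metric on the set of D×D positive definite matrices of trace 1 (it is symmetric, nonnegative, zero iff X = Y, and satisfies the triangle inequality). -/
open Matrix
open scoped ComplexOrder

/-- `d₀(X,Y) = -log m(X,Y) - log m(Y,X)`. -/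
noncomputable def dzero {D : ℕ} (X Y : Matrix (Fin D) (Fin D) ℂ) : ℝ :=
  - Real.log (mfun X Y) - Real.log (mfun Y X)

namespace StmtAux

variable {D : ℕ}

lemma real_smul_mat (c : ℝ) (M : Matrix (Fin D) (Fin D) ℂ) : c • M = (c : ℂ) • M := by
  ext i j; simp [Complex.real_smul]

lemma herm_quad_real {A : Matrix (Fin D) (Fin D) ℂ} (hA : A.IsHermitian) (x : Fin D → ℂ) :
    star x ⬝ᵥ (A *ᵥ x) = (((star x ⬝ᵥ (A *ᵥ x)).re : ℝ) : ℂ) := by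
  have h : (starRingEnd ℂ) (star x ⬝ᵥ (A *ᵥ x)) = star x ⬝ᵥ (A *ᵥ x) := by
    conv_rhs => rw [← hA.eq]
    rw [starRingEnd_apply, star_dotProduct, star_mulVec, star_star, dotProduct_mulVec]
  exact (Complex.conj_eq_iff_re.mp h).symm

lemma quad_sub_smul (X Y : Matrix (Fin D) (Fin D) ℂ) (l : ℝ) (x : Fin D → ℂ) :
    star x ⬝ᵥ ((X - l • Y) *ᵥ x)
      = star x ⬝ᵥ (X *ᵥ x) - (l : ℂ) * (star x ⬝ᵥ (Y *ᵥ x)) := by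
  rw [real_smul_mat, sub_mulVec, dotProduct_sub, smul_mulVec, dotProduct_smul,
    smul_eq_mul]

lemma smul_hermitian {A : Matrix (Fin D) (Fin D) ℂ} (hA : A.IsHermitian) (c : ℝ) :
    (c • A).IsHermitian := by
  rw [real_smul_mat]
  unfold Matrix.IsHermitian at *
  rw [conjTranspose_smul, hA]
  simp

lemma psd_smul {c : ℝ} (hc : 0 ≤ c) {M : Matrix (Fin D) (Fin D) ℂ} (hM : M.PosSemidef) :
    (c • M).PosSemidef := by
  refine .of_dotProduct_mulVec_nonneg (smul_hermitian hM.1 c) fun x => ?_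
  rw [real_smul_mat, smul_mulVec, dotProduct_smul, smul_eq_mul]
  exact mul_nonneg (by exact_mod_cast Complex.zero_le_real.mpr hc) (hM.dotProduct_mulVec_nonneg x)

/-- membership criterion -/
lemma memS_iff {X Y : Matrix (Fin D) (Fin D) ℂ} (hX : X.IsHermitian) (hY : Y.IsHermitian)
    (l : ℝ) :
    (X - l • Y).PosSemidef ↔
      ∀ x : Fin D → ℂ, l * (star x ⬝ᵥ (Y *ᵥ x)).re ≤ (star x ⬝ᵥ (X *ᵥ x)).re := by
  constructor
  · intro h x
    have h2 := h.dotProduct_mulVec_nonneg x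
    rw [quad_sub_smul] at h2
    rw [herm_quad_real hX x, herm_quad_real hY x] at h2
    have : (0:ℂ) ≤ (((star x ⬝ᵥ (X *ᵥ x)).re - l * (star x ⬝ᵥ (Y *ᵥ x)).re : ℝ) : ℂ) := by
      convert h2 using 1; push_cast; ring
    rw [← Complex.ofReal_zero, Complex.real_le_real] at this
    linarith
  · intro h
    refine .of_dotProduct_mulVec_nonneg (hX.sub (smul_hermitian hY l)) fun x => ?_
    rw [quad_sub_smul]
    rw [herm_quad_real hX x, herm_quad_real hY x]
    have : (0:ℂ) ≤ (((star x ⬝ᵥ (X *ᵥ x)).re - l * (star x ⬝ᵥ (Y *ᵥ x)).re : ℝ) : ℂ) := by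
      rw [← Complex.ofReal_zero, Complex.real_le_real]; linarith [h x]
    convert this using 1; push_cast; ring

lemma psd_diag_nonneg {A : Matrix (Fin D) (Fin D) ℂ} (hA : A.PosSemidef) (i : Fin D) :
    0 ≤ A i i := by
  have := hA.dotProduct_mulVec_nonneg (Pi.single i 1)
  have e : star (Pi.single i 1) ⬝ᵥ (A *ᵥ Pi.single i (1:ℂ)) = A i i := by
    rw [mulVec_single]
    simp [dotProduct, Pi.single_apply, apply_ite]
  rwa [e] at this

lemma psd_trace_nonneg {A : Matrix (Fin D) (Fin D) ℂ} (hA : A.PosSemidef) :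
    0 ≤ A.trace :=
  Finset.sum_nonneg fun i _ => psd_diag_nonneg hA i

lemma conj_diag_psd {A : Matrix (Fin D) (Fin D) ℂ} (hA : A.IsHermitian)
    (f : Fin D → ℝ) (hf : ∀ i, 0 ≤ f i) :
    ((hA.eigenvectorUnitary : Matrix (Fin D) (Fin D) ℂ) * diagonal (fun i => ((f i : ℝ) : ℂ)) *
      star (hA.eigenvectorUnitary : Matrix (Fin D) (Fin D) ℂ)).PosSemidef := by
  rw [star_eq_conjTranspose]
  exact (posSemidef_diagonal_iff.mpr fun i => by simpa using hf i).mul_mul_conjTranspose_same _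

lemma herm_sub_smul_one_psd {A : Matrix (Fin D) (Fin D) ℂ} (hA : A.IsHermitian) {c : ℝ}
    (h : ∀ i, c ≤ hA.eigenvalues i) : (A - c • (1 : Matrix (Fin D) (Fin D) ℂ)).PosSemidef := by
  set U := (hA.eigenvectorUnitary : Matrix (Fin D) (Fin D) ℂ) with hUdef
  have hU : U * star U = 1 := mem_unitaryGroup_iff.mp hA.eigenvectorUnitary.2
  have key : A - c • (1 : Matrix (Fin D) (Fin D) ℂ)
      = U * diagonal (fun i => ((hA.eigenvalues i - c : ℝ) : ℂ)) * star U := by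
    conv_lhs => rw [hA.spectral_theorem, Unitary.conjStarAlgAut_apply]
    have : diagonal (fun i => ((hA.eigenvalues i - c : ℝ) : ℂ))
        = diagonal (RCLike.ofReal ∘ hA.eigenvalues) - (c : ℂ) • (1 : Matrix (Fin D) (Fin D) ℂ) := by
      ext i j
      by_cases hij : i = j
      · subst hij
        simp [diagonal_apply_eq, Matrix.sub_apply, Matrix.smul_apply, Matrix.one_apply]
      · simp [diagonal_apply_ne _ hij, Matrix.sub_apply, Matrix.smul_apply,
          Matrix.one_apply_ne hij]
    rw [this, Matrix.mul_sub, Matrix.sub_mul, real_smul_mat, Matrix.mul_smul, Matrix.smul_mul,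
      Matrix.mul_one, hU]
  rw [key]; exact conj_diag_psd hA _ fun i => sub_nonneg.mpr (h i)

lemma herm_smul_one_sub_psd {A : Matrix (Fin D) (Fin D) ℂ} (hA : A.IsHermitian) {c : ℝ}
    (h : ∀ i, hA.eigenvalues i ≤ c) : (c • (1 : Matrix (Fin D) (Fin D) ℂ) - A).PosSemidef := by
  set U := (hA.eigenvectorUnitary : Matrix (Fin D) (Fin D) ℂ) with hUdef
  have hU : U * star U = 1 := mem_unitaryGroup_iff.mp hA.eigenvectorUnitary.2
  have key : c • (1 : Matrix (Fin D) (Fin D) ℂ) - A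
      = U * diagonal (fun i => ((c - hA.eigenvalues i : ℝ) : ℂ)) * star U := by
    conv_lhs => rw [hA.spectral_theorem, Unitary.conjStarAlgAut_apply]
    have : diagonal (fun i => ((c - hA.eigenvalues i : ℝ) : ℂ))
        = (c : ℂ) • (1 : Matrix (Fin D) (Fin D) ℂ) - diagonal (RCLike.ofReal ∘ hA.eigenvalues) := by
      ext i j
      by_cases hij : i = j
      · subst hij
        simp [diagonal_apply_eq, Matrix.sub_apply, Matrix.smul_apply, Matrix.one_apply]
      · simp [diagonal_apply_ne _ hij, Matrix.sub_apply, Matrix.smul_apply,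
          Matrix.one_apply_ne hij]
    rw [this, Matrix.mul_sub, Matrix.sub_mul, real_smul_mat, Matrix.mul_smul, Matrix.smul_mul,
      Matrix.mul_one, hU]
  rw [key]; exact conj_diag_psd hA _ fun i => sub_nonneg.mpr (h i)

lemma trace_eq_sum_eigs {A : Matrix (Fin D) (Fin D) ℂ} (hA : A.IsHermitian) :
    A.trace = ∑ i, ((hA.eigenvalues i : ℝ) : ℂ) := by
  have hU : star (hA.eigenvectorUnitary : Matrix (Fin D) (Fin D) ℂ)
      * (hA.eigenvectorUnitary : Matrix (Fin D) (Fin D) ℂ) = 1 :=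
    mem_unitaryGroup_iff'.mp hA.eigenvectorUnitary.2
  conv_lhs => rw [hA.spectral_theorem, Unitary.conjStarAlgAut_apply]
  rw [trace_mul_cycle, hU, Matrix.one_mul, trace_diagonal]
  rfl

section Main

variable {X Y Z : Matrix (Fin D) (Fin D) ℂ}

lemma zero_memS (hX : X.PosDef) : (0:ℝ) ∈ {l : ℝ | (X - l • Y).PosSemidef} := by
  simp only [Set.mem_setOf_eq, zero_smul, sub_zero]
  exact hX.posSemidef

lemma memS_le_one (trX : X.trace = 1) (trY : Y.trace = 1) {l : ℝ}
    (hl : (X - l • Y).PosSemidef) : l ≤ 1 := by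
  have h := psd_trace_nonneg hl
  rw [trace_sub, trace_smul, trX, trY, Complex.real_smul, mul_one] at h
  have h2 := (Complex.le_def.mp h).1
  simpa using h2

lemma bddS (trX : X.trace = 1) (trY : Y.trace = 1) :
    BddAbove {l : ℝ | (X - l • Y).PosSemidef} :=
  ⟨1, fun _ hl => memS_le_one trX trY hl⟩

lemma mfun_le_one (hX : X.PosDef) (trX : X.trace = 1) (trY : Y.trace = 1) :
    mfun X Y ≤ 1 :=
  csSup_le ⟨0, zero_memS hX⟩ fun _ hl => memS_le_one trX trY hl

lemma eps_memS [Nonempty (Fin D)] (hX : X.PosDef) (hY : Y.PosDef) (trY : Y.trace = 1) :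
    ∃ ε : ℝ, 0 < ε ∧ (X - ε • Y).PosSemidef := by
  set c : ℝ := Finset.univ.inf' Finset.univ_nonempty hX.1.eigenvalues with hc
  have hcpos : 0 < c := by
    rw [hc, Finset.lt_inf'_iff]
    exact fun i _ => hX.eigenvalues_pos i
  have h1 : (X - c • (1 : Matrix (Fin D) (Fin D) ℂ)).PosSemidef :=
    herm_sub_smul_one_psd hX.1 fun i => Finset.inf'_le _ (Finset.mem_univ i)
  have heig : ∀ i, hY.1.eigenvalues i ≤ 1 := by
    have hsum : ∑ i, hY.1.eigenvalues i = 1 := by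
      have := trace_eq_sum_eigs hY.1
      rw [trY] at this
      have : ((1:ℝ) : ℂ) = ((∑ i, hY.1.eigenvalues i : ℝ) : ℂ) := by
        push_cast
        simpa using this
      exact_mod_cast this.symm
    intro i
    calc hY.1.eigenvalues i ≤ ∑ j, hY.1.eigenvalues j :=
          Finset.single_le_sum (fun j _ => (hY.posSemidef.eigenvalues_nonneg j)) (Finset.mem_univ i)
      _ = 1 := hsum
  have h2 : ((1:ℝ) • (1 : Matrix (Fin D) (Fin D) ℂ) - Y).PosSemidef :=
    herm_smul_one_sub_psd hY.1 heig
  refine ⟨c, hcpos, ?_⟩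
  have key : X - c • Y
      = (X - c • (1 : Matrix (Fin D) (Fin D) ℂ))
        + c • ((1:ℝ) • (1 : Matrix (Fin D) (Fin D) ℂ) - Y) := by
    rw [one_smul, smul_sub]
    abel
  rw [key]
  exact h1.add (psd_smul hcpos.le h2)

lemma mfun_pos [Nonempty (Fin D)] (hX : X.PosDef) (hY : Y.PosDef)
    (trX : X.trace = 1) (trY : Y.trace = 1) : 0 < mfun X Y := by
  obtain ⟨ε, hε, hmem⟩ := eps_memS hX hY trY
  exact lt_of_lt_of_le hε (le_csSup (bddS trX trY) hmem)

lemma mfun_memS (hX : X.PosDef) (hY : Y.PosDef) (trX : X.trace = 1) (trY : Y.trace = 1) :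
    (X - mfun X Y • Y).PosSemidef := by
  rw [memS_iff hX.1 hY.1]
  intro x
  by_cases hx : x = 0
  · simp [hx]
  · have hqy : 0 < (star x ⬝ᵥ (Y *ᵥ x)).re := hY.re_dotProduct_pos hx
    have hub : mfun X Y ≤ (star x ⬝ᵥ (X *ᵥ x)).re / (star x ⬝ᵥ (Y *ᵥ x)).re := by
      refine csSup_le ⟨0, zero_memS hX⟩ fun l hl => ?_
      rw [le_div_iff₀ hqy]
      exact (memS_iff hX.1 hY.1 l).mp hl x
    calc mfun X Y * (star x ⬝ᵥ (Y *ᵥ x)).re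
        ≤ ((star x ⬝ᵥ (X *ᵥ x)).re / (star x ⬝ᵥ (Y *ᵥ x)).re) * (star x ⬝ᵥ (Y *ᵥ x)).re :=
          mul_le_mul_of_nonneg_right hub hqy.le
      _ = (star x ⬝ᵥ (X *ᵥ x)).re := div_mul_cancel₀ _ hqy.ne'

lemma mfun_self [Nonempty (Fin D)] (hX : X.PosDef) (trX : X.trace = 1) : mfun X X = 1 := by
  refine le_antisymm (mfun_le_one hX trX trX) (le_csSup (bddS trX trX) ?_)
  show (X - (1:ℝ) • X).PosSemidef
  rw [one_smul, sub_self]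
  exact Matrix.PosSemidef.zero

lemma eq_of_psd_sub (h1 : (X - Y).PosSemidef) (h2 : (Y - X).PosSemidef) : X = Y := by
  have hz : ∀ x : Fin D → ℂ, (X - Y) *ᵥ x = 0 := by
    intro x
    rw [← h1.dotProduct_mulVec_zero_iff x]
    have hb := h2.dotProduct_mulVec_nonneg x
    have : Y - X = -(X - Y) := by abel
    rw [this, neg_mulVec, dotProduct_neg, le_neg, neg_zero] at hb
    exact le_antisymm hb (h1.dotProduct_mulVec_nonneg x)
  have : X - Y = 0 := by
    ext i j
    have := congrFun (hz (Pi.single j 1)) i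
    rw [mulVec_single] at this
    simpa using this
  exact sub_eq_zero.mp this

lemma mfun_mul_le (hX : X.PosDef) (hY : Y.PosDef) (hZ : Z.PosDef)
    (trX : X.trace = 1) (trY : Y.trace = 1) (trZ : Z.trace = 1) [Nonempty (Fin D)] :
    mfun X Y * mfun Y Z ≤ mfun X Z := by
  have ha : 0 < mfun X Y := mfun_pos hX hY trX trY
  have h1 := mfun_memS hX hY trX trY
  have h2 := mfun_memS hY hZ trY trZ
  refine le_csSup (bddS trX trZ) ?_
  show (X - (mfun X Y * mfun Y Z) • Z).PosSemidef
  have key : X - (mfun X Y * mfun Y Z) • Z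
      = (X - mfun X Y • Y) + mfun X Y • (Y - mfun Y Z • Z) := by
    rw [smul_sub, smul_smul]
    abel
  rw [key]
  exact h1.add (psd_smul ha.le h2)

end Main

end StmtAux

open StmtAux

theorem stmt4 {D : ℕ} :
    (∀ X Y : Matrix (Fin D) (Fin D) ℂ, X.PosDef → Y.PosDef → X.trace = 1 → Y.trace = 1 →
      dzero X Y = dzero Y X) ∧
    (∀ X Y : Matrix (Fin D) (Fin D) ℂ, X.PosDef → Y.PosDef → X.trace = 1 → Y.trace = 1 →
      0 ≤ dzero X Y) ∧
    (∀ X Y : Matrix (Fin D) (Fin D) ℂ, X.PosDef → Y.PosDef → X.trace = 1 → Y.trace = 1 →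
      (dzero X Y = 0 ↔ X = Y)) ∧
    (∀ X Y Z : Matrix (Fin D) (Fin D) ℂ, X.PosDef → Y.PosDef → Z.PosDef →
      X.trace = 1 → Y.trace = 1 → Z.trace = 1 →
      dzero X Z ≤ dzero X Y + dzero Y Z) := by
  have hne : ∀ X : Matrix (Fin D) (Fin D) ℂ, X.trace = 1 → Nonempty (Fin D) := by
    intro X trX
    rcases Nat.eq_zero_or_pos D with h | h
    · subst h
      rw [Matrix.trace] at trX
      simp at trX
    · exact ⟨⟨0, h⟩⟩
  refine ⟨?_, ?_, ?_, ?_⟩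
  · intro X Y _ _ _ _
    unfold dzero; ring
  · intro X Y hX hY trX trY
    haveI := hne X trX
    have h1 : Real.log (mfun X Y) ≤ 0 :=
      Real.log_nonpos (mfun_pos hX hY trX trY).le (mfun_le_one hX trX trY)
    have h2 : Real.log (mfun Y X) ≤ 0 :=
      Real.log_nonpos (mfun_pos hY hX trY trX).le (mfun_le_one hY trY trX)
    unfold dzero; linarith
  · intro X Y hX hY trX trY
    haveI := hne X trX
    constructor
    · intro h
      have p1 : 0 < mfun X Y := mfun_pos hX hY trX trY
      have p2 : 0 < mfun Y X := mfun_pos hY hX trY trX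
      have h1 : Real.log (mfun X Y) ≤ 0 := Real.log_nonpos p1.le (mfun_le_one hX trX trY)
      have h2 : Real.log (mfun Y X) ≤ 0 := Real.log_nonpos p2.le (mfun_le_one hY trY trX)
      unfold dzero at h
      have e1 : Real.log (mfun X Y) = 0 := by linarith
      have e2 : Real.log (mfun Y X) = 0 := by linarith
      have m1 : mfun X Y = 1 := by
        rcases Real.log_eq_zero.mp e1 with h' | h' | h' <;> [linarith; exact h'; linarith]
      have m2 : mfun Y X = 1 := by
        rcases Real.log_eq_zero.mp e2 with h' | h' | h' <;> [linarith; exact h'; linarith]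
      have hXY := mfun_memS hX hY trX trY
      have hYX := mfun_memS hY hX trY trX
      rw [m1, one_smul] at hXY
      rw [m2, one_smul] at hYX
      exact eq_of_psd_sub hXY hYX
    · rintro rfl
      unfold dzero
      rw [mfun_self hX trX]
      simp
  · intro X Y Z hX hY hZ trX trY trZ
    haveI := hne X trX
    have pXY : 0 < mfun X Y := mfun_pos hX hY trX trY
    have pYX : 0 < mfun Y X := mfun_pos hY hX trY trX
    have pYZ : 0 < mfun Y Z := mfun_pos hY hZ trY trZ
    have pZY : 0 < mfun Z Y := mfun_pos hZ hY trZ trY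
    have pXZ : 0 < mfun X Z := mfun_pos hX hZ trX trZ
    have pZX : 0 < mfun Z X := mfun_pos hZ hX trZ trX
    have h1 : mfun X Y * mfun Y Z ≤ mfun X Z := mfun_mul_le hX hY hZ trX trY trZ
    have h2 : mfun Z Y * mfun Y X ≤ mfun Z X := mfun_mul_le hZ hY hX trZ trY trX
    have l1 : Real.log (mfun X Y) + Real.log (mfun Y Z) ≤ Real.log (mfun X Z) := by
      rw [← Real.log_mul pXY.ne' pYZ.ne']
      exact Real.log_le_log (by positivity) h1
    have l2 : Real.log (mfun Z Y) + Real.log (mfun Y X) ≤ Real.log (mfun Z X) := by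
      rw [← Real.log_mul pZY.ne' pYX.ne']
      exact Real.log_le_log (by positivity) h2
    unfold dzero
    linarith
end

section
/- The function d(X,Y) = (1 - m(X,Y)m(Y,X))/(1 + m(X,Y)m(Y,X)) defines a metric on the set 𝕊_D of D×D positive semi-definite trace-one matrices, with the convention that products of sups are interpreted via m taking values in [0,1]. -/
open Matrix
open scoped ComplexOrder

/-- The projective metric `d(X,Y) = (1 - m(X,Y)m(Y,X))/(1 + m(X,Y)m(Y,X))`. -/
noncomputable def dfun {D : ℕ} (X Y : Matrix (Fin D) (Fin D) ℂ) : ℝ :=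
  (1 - mfun X Y * mfun Y X) / (1 + mfun X Y * mfun Y X)

namespace Helper

variable {D : ℕ}

lemma diag_nonneg {M : Matrix (Fin D) (Fin D) ℂ} (hM : M.PosSemidef) (i : Fin D) :
    0 ≤ M i i := by
  have := hM.dotProduct_mulVec_nonneg (Pi.single i 1)
  have hst : star (Pi.single i 1 : Fin D → ℂ) = Pi.single i 1 := by
    ext j; simp [Pi.single_apply, apply_ite]
  rw [hst] at this
  simpa [Matrix.mulVec_single, single_dotProduct] using this

lemma trace_nonneg' {M : Matrix (Fin D) (Fin D) ℂ} (hM : M.PosSemidef) :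
    0 ≤ M.trace := by
  unfold Matrix.trace
  exact Finset.sum_nonneg fun i _ => diag_nonneg hM i

lemma smul_psd {a : ℝ} (ha : 0 ≤ a) {Y : Matrix (Fin D) (Fin D) ℂ} (hY : Y.PosSemidef) :
    (a • Y).PosSemidef := by
  refine Matrix.PosSemidef.of_dotProduct_mulVec_nonneg ?_ (fun x => ?_)
  · show (a • Y)ᴴ = a • Y
    rw [Matrix.conjTranspose_smul, star_trivial, hY.1]
  · have h := hY.dotProduct_mulVec_nonneg x
    have : star x ⬝ᵥ (a • Y) *ᵥ x = (a : ℂ) * (star x ⬝ᵥ Y *ᵥ x) := by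
      rw [smul_mulVec, dotProduct_smul]
      simp [Complex.real_smul]
    rw [this]
    exact mul_nonneg (Complex.zero_le_real.2 ha) h

lemma quad_re {M : Matrix (Fin D) (Fin D) ℂ} (hM : M.PosSemidef) (x : Fin D → ℂ) :
    0 ≤ (star x ⬝ᵥ M *ᵥ x).re ∧ (star x ⬝ᵥ M *ᵥ x).im = 0 := by
  have := hM.dotProduct_mulVec_nonneg x
  rw [Complex.le_def] at this
  exact ⟨by simpa using this.1, by simpa using this.2.symm⟩

lemma quad_sub_smul (X Y : Matrix (Fin D) (Fin D) ℂ) (l : ℝ) (x : Fin D → ℂ) :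
    star x ⬝ᵥ (X - l • Y) *ᵥ x
      = star x ⬝ᵥ X *ᵥ x - (l : ℂ) * (star x ⬝ᵥ Y *ᵥ x) := by
  rw [sub_mulVec, dotProduct_sub, smul_mulVec, dotProduct_smul]
  simp [Complex.real_smul]

end Helper

namespace Helper

variable {D : ℕ} {X Y Z : Matrix (Fin D) (Fin D) ℂ}

lemma zero_mem (hX : X.PosSemidef) :
    (0:ℝ) ∈ {l : ℝ | (X - l • Y).PosSemidef} := by
  simpa [Set.mem_setOf_eq] using hX

lemma mem_le_one (hXt : X.trace = 1) (hYt : Y.trace = 1) :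
    ∀ l ∈ {l : ℝ | (X - l • Y).PosSemidef}, l ≤ (1:ℝ) := by
  intro l hl
  have h := trace_nonneg' hl
  rw [Matrix.trace_sub, Matrix.trace_smul, hXt, hYt] at h
  rw [Complex.real_smul, mul_one] at h
  rw [Complex.le_def] at h
  have := h.1
  simp at this
  linarith

lemma bddS (hXt : X.trace = 1) (hYt : Y.trace = 1) :
    BddAbove {l : ℝ | (X - l • Y).PosSemidef} :=
  ⟨1, fun l hl => mem_le_one hXt hYt l hl⟩

lemma mfun_nonneg (hX : X.PosSemidef) (hXt : X.trace = 1) (hYt : Y.trace = 1) :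
    0 ≤ mfun X Y :=
  le_csSup (bddS hXt hYt) (zero_mem hX)

lemma mfun_le_one (hX : X.PosSemidef) (hXt : X.trace = 1) (hYt : Y.trace = 1) :
    mfun X Y ≤ 1 :=
  csSup_le ⟨0, zero_mem hX⟩ (mem_le_one hXt hYt)

lemma quad_ineq_of_mem {l : ℝ} (hl : (X - l • Y).PosSemidef) (x : Fin D → ℂ) :
    l * (star x ⬝ᵥ Y *ᵥ x).re ≤ (star x ⬝ᵥ X *ᵥ x).re := by
  have h := (quad_re hl x).1
  rw [quad_sub_smul] at h
  have hYim := (star x ⬝ᵥ Y *ᵥ x).im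
  simp [Complex.sub_re, Complex.mul_re, Complex.ofReal_re, Complex.ofReal_im] at h
  linarith

lemma mfun_mem (hX : X.PosSemidef) (hY : Y.PosSemidef)
    (hXt : X.trace = 1) (hYt : Y.trace = 1) :
    (X - mfun X Y • Y).PosSemidef := by
  refine Matrix.PosSemidef.of_dotProduct_mulVec_nonneg ?_ ?_
  · have hH : (mfun X Y • Y)ᴴ = mfun X Y • Y := by
      rw [Matrix.conjTranspose_smul, star_trivial, hY.1]
    exact hX.1.sub hH
  · intro x
    set a := (star x ⬝ᵥ X *ᵥ x).re with ha_def
    set b := (star x ⬝ᵥ Y *ᵥ x).re with hb_def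
    obtain ⟨haX, hiX⟩ := quad_re hX x
    obtain ⟨hbY, hiY⟩ := quad_re hY x
    have key : mfun X Y * b ≤ a := by
      rcases eq_or_lt_of_le hbY with hb0 | hbpos
      · have hb' : b = 0 := hb0.symm
        rw [hb', mul_zero]; exact haX
      · have hsup : mfun X Y ≤ a / b := by
          apply csSup_le ⟨0, zero_mem hX⟩
          intro l hl
          have := quad_ineq_of_mem hl x
          rw [le_div_iff₀ hbpos]
          exact this
        calc mfun X Y * b ≤ (a / b) * b := by
              exact mul_le_mul_of_nonneg_right hsup (le_of_lt hbpos)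
          _ = a := by exact div_mul_cancel₀ a (ne_of_gt hbpos)
    rw [quad_sub_smul, Complex.le_def]
    constructor
    · simp [Complex.sub_re, Complex.mul_re, Complex.ofReal_re, Complex.ofReal_im, hiY]
      linarith
    · simp [Complex.sub_im, Complex.mul_im, Complex.ofReal_re, Complex.ofReal_im, hiX, hiY]

lemma trans_mem {a b : ℝ} (ha : 0 ≤ a)
    (hXY : (X - a • Y).PosSemidef) (hYZ : (Y - b • Z).PosSemidef) :
    (X - (a * b) • Z).PosSemidef := by
  have h := hXY.add (smul_psd ha hYZ)
  have e : X - a • Y + a • (Y - b • Z) = X - (a * b) • Z := by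
    rw [smul_sub, smul_smul]; abel
  rwa [e] at h

lemma eq_of_psd_sub (h1 : (X - Y).PosSemidef) (h2 : (Y - X).PosSemidef) : X = Y := by
  have hz : ∀ x, (X - Y) *ᵥ x = 0 := by
    intro x
    have a1 := h1.dotProduct_mulVec_nonneg x
    have a2 := h2.dotProduct_mulVec_nonneg x
    have hneg : star x ⬝ᵥ (Y - X) *ᵥ x = -(star x ⬝ᵥ (X - Y) *ᵥ x) := by
      rw [show Y - X = -(X - Y) by abel, Matrix.neg_mulVec, dotProduct_neg]
    rw [hneg] at a2
    have : star x ⬝ᵥ (X - Y) *ᵥ x = 0 := le_antisymm (neg_nonneg.1 a2) a1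
    exact (h1.dotProduct_mulVec_zero_iff x).1 this
  have hsub : X - Y = 0 := by
    ext i j
    have := congrFun (hz (Pi.single j 1)) i
    simpa [Matrix.mulVec_single] using this
  exact sub_eq_zero.1 hsub

end Helper

namespace Helper

variable {D : ℕ} {X Y Z : Matrix (Fin D) (Fin D) ℂ}

lemma mfun_self (hX : X.PosSemidef) (hXt : X.trace = 1) : mfun X X = 1 := by
  apply le_antisymm (mfun_le_one hX hXt hXt)
  apply le_csSup (bddS hXt hXt)
  show (X - (1:ℝ) • X).PosSemidef
  have : X - (1:ℝ) • X = 0 := by simp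
  rw [this]
  exact Matrix.PosSemidef.zero

lemma mfun_mul_le (hX : X.PosSemidef) (hY : Y.PosSemidef) (hZ : Z.PosSemidef)
    (hXt : X.trace = 1) (hYt : Y.trace = 1) (hZt : Z.trace = 1) :
    mfun X Y * mfun Y Z ≤ mfun X Z :=
  le_csSup (bddS hXt hZt)
    (trans_mem (mfun_nonneg hX hXt hYt) (mfun_mem hX hY hXt hYt) (mfun_mem hY hZ hYt hZt))

lemma t_le_one (hX : X.PosSemidef) (hY : Y.PosSemidef)
    (hXt : X.trace = 1) (hYt : Y.trace = 1) :
    mfun X Y * mfun Y X ≤ 1 := by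
  have h := mfun_mul_le hX hY hX hXt hYt hXt
  rw [mfun_self hX hXt] at h
  exact h

lemma eq_of_t_eq_one (hX : X.PosSemidef) (hY : Y.PosSemidef)
    (hXt : X.trace = 1) (hYt : Y.trace = 1)
    (ht : mfun X Y * mfun Y X = 1) : X = Y := by
  have h1 := mfun_le_one hX hXt hYt
  have h2 := mfun_le_one hY hYt hXt
  have h3 := mfun_nonneg hX hXt hYt
  have h4 := mfun_nonneg hY hYt hXt
  have e1 : mfun X Y = 1 := by nlinarith
  have e2 : mfun Y X = 1 := by nlinarith
  have p1 := mfun_mem hX hY hXt hYt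
  have p2 := mfun_mem hY hX hYt hXt
  rw [e1, one_smul] at p1
  rw [e2, one_smul] at p2
  exact eq_of_psd_sub p1 p2

lemma real_triangle {t1 t2 u : ℝ} (h1 : 0 ≤ t1) (h2 : 0 ≤ t2)
    (h1' : t1 ≤ 1) (h2' : t2 ≤ 1) (hu : t1 * t2 ≤ u) (hu' : u ≤ 1) :
    (1 - u) / (1 + u) ≤ (1 - t1) / (1 + t1) + (1 - t2) / (1 + t2) := by
  have p0 : (0:ℝ) < 1 + u := by nlinarith
  have p1 : (0:ℝ) < 1 + t1 := by linarith
  have p2 : (0:ℝ) < 1 + t2 := by linarith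
  rw [div_add_div _ _ (ne_of_gt p1) (ne_of_gt p2), div_le_div_iff₀ p0 (by positivity)]
  nlinarith [mul_nonneg (mul_nonneg (sub_nonneg.2 h1') (sub_nonneg.2 h2')) (sub_nonneg.2 hu'),
    mul_nonneg (sub_nonneg.2 hu) (mul_nonneg h1 h2),
    mul_nonneg (sub_nonneg.2 h1') (sub_nonneg.2 h2'),
    sub_nonneg.2 hu, mul_nonneg h1 h2]

end Helper

theorem stmt5 {D : ℕ} :
    (∀ X Y : Matrix (Fin D) (Fin D) ℂ, X.PosSemidef → Y.PosSemidef →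
      X.trace = 1 → Y.trace = 1 → dfun X Y = dfun Y X) ∧
    (∀ X Y : Matrix (Fin D) (Fin D) ℂ, X.PosSemidef → Y.PosSemidef →
      X.trace = 1 → Y.trace = 1 → 0 ≤ dfun X Y) ∧
    (∀ X Y : Matrix (Fin D) (Fin D) ℂ, X.PosSemidef → Y.PosSemidef →
      X.trace = 1 → Y.trace = 1 → (dfun X Y = 0 ↔ X = Y)) ∧
    (∀ X Y Z : Matrix (Fin D) (Fin D) ℂ, X.PosSemidef → Y.PosSemidef → Z.PosSemidef →
      X.trace = 1 → Y.trace = 1 → Z.trace = 1 →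
      dfun X Z ≤ dfun X Y + dfun Y Z) := by
  refine ⟨?_, ?_, ?_, ?_⟩
  · intro X Y _ _ _ _
    unfold dfun
    rw [mul_comm]
  · intro X Y hX hY hXt hYt
    have h1 := Helper.t_le_one hX hY hXt hYt
    have h3 := Helper.mfun_nonneg hX hXt hYt
    have h4 := Helper.mfun_nonneg hY hYt hXt
    unfold dfun
    apply div_nonneg <;> nlinarith
  · intro X Y hX hY hXt hYt
    have h1 := Helper.t_le_one hX hY hXt hYt
    have h3 := Helper.mfun_nonneg hX hXt hYt
    have h4 := Helper.mfun_nonneg hY hYt hXt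
    unfold dfun
    constructor
    · intro h
      rw [div_eq_zero_iff] at h
      rcases h with h | h
      · exact Helper.eq_of_t_eq_one hX hY hXt hYt (by linarith)
      · nlinarith
    · intro h
      subst h
      rw [Helper.mfun_self hX hXt]
      norm_num
  · intro X Y Z hX hY hZ hXt hYt hZt
    have m1 := Helper.mfun_nonneg hX hXt hYt
    have m2 := Helper.mfun_nonneg hY hYt hXt
    have m3 := Helper.mfun_nonneg hY hYt hZt
    have m4 := Helper.mfun_nonneg hZ hZt hYt
    have t1le := Helper.t_le_one hX hY hXt hYt
    have t2le := Helper.t_le_one hY hZ hYt hZt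
    have tule := Helper.t_le_one hX hZ hXt hZt
    have hA := Helper.mfun_mul_le hX hY hZ hXt hYt hZt
    have hB := Helper.mfun_mul_le hZ hY hX hZt hYt hXt
    have hu : (mfun X Y * mfun Y X) * (mfun Y Z * mfun Z Y) ≤ mfun X Z * mfun Z X := by
      have key := mul_le_mul hA hB (mul_nonneg m4 m2)
        (le_trans (mul_nonneg m1 m3) hA)
      calc (mfun X Y * mfun Y X) * (mfun Y Z * mfun Z Y)
          = (mfun X Y * mfun Y Z) * (mfun Z Y * mfun Y X) := by ring
        _ ≤ mfun X Z * mfun Z X := key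
    unfold dfun
    have := Helper.real_triangle (t1 := mfun X Y * mfun Y X) (t2 := mfun Y Z * mfun Z Y)
      (u := mfun X Z * mfun Z X)
      (mul_nonneg m1 m2) (mul_nonneg m3 m4) t1le t2le hu tule
    linarith
end

section
/- The supremum of d(X,Y) over all pairs X, Y of D×D positive semi-definite trace-one matrices equals 1 (for D ≥ 2); moreover if X is positive definite and Y positive semi-definite with trace 1, then d(X,Y) = 1 if and only if Y is not positive definite. -/
open Matrix
open scoped ComplexOrder

namespace Stmt8Aux

variable {D : ℕ}

lemma psd_smul {M : Matrix (Fin D) (Fin D) ℂ} (hM : M.PosSemidef) {c : ℝ} (hc : 0 ≤ c) :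
    (c • M).PosSemidef := by
  apply PosSemidef.of_dotProduct_mulVec_nonneg
  · show (c • M)ᴴ = c • M
    rw [conjTranspose_smul]
    simp [hM.1.eq]
  · intro x
    rw [smul_mulVec, dotProduct_smul, Complex.real_smul]
    exact mul_nonneg (by exact_mod_cast hc) (hM.dotProduct_mulVec_nonneg x)

lemma posdef_smul {M : Matrix (Fin D) (Fin D) ℂ} (hM : M.PosDef) {c : ℝ} (hc : 0 < c) :
    (c • M).PosDef := by
  apply PosDef.of_dotProduct_mulVec_pos
  · show (c • M)ᴴ = c • M
    rw [conjTranspose_smul]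
    simp [hM.1.eq]
  · intro x hx
    rw [smul_mulVec, dotProduct_smul, Complex.real_smul]
    exact mul_pos (by exact_mod_cast hc) (hM.dotProduct_mulVec_pos hx)

lemma psd_diag {M : Matrix (Fin D) (Fin D) ℂ} (hM : M.PosSemidef) (i : Fin D) :
    0 ≤ M i i := by
  have h := hM.dotProduct_mulVec_nonneg (Pi.single i 1)
  have : star (Pi.single i 1) ⬝ᵥ M *ᵥ (Pi.single i 1 : Fin D → ℂ) = M i i := by
    simp [dotProduct, mulVec, Pi.single_apply, Finset.sum_ite_eq, apply_ite]
  rwa [this] at h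

lemma psd_trace_nonneg {M : Matrix (Fin D) (Fin D) ℂ} (hM : M.PosSemidef) :
    0 ≤ M.trace := by
  exact Finset.sum_nonneg fun i _ => psd_diag hM i

lemma trace_sub_smul (X Y : Matrix (Fin D) (Fin D) ℂ) (l : ℝ) :
    (X - l • Y).trace = X.trace - (l : ℂ) * Y.trace := by
  rw [trace_sub, trace_smul, Complex.real_smul]

/-- bound: any l with X - l•Y PSD satisfies l ≤ 1 (traces 1). -/
lemma mem_le_one {X Y : Matrix (Fin D) (Fin D) ℂ} (hX : X.trace = 1) (hY : Y.trace = 1)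
    {l : ℝ} (hl : (X - l • Y).PosSemidef) : l ≤ 1 := by
  have h := psd_trace_nonneg hl
  rw [trace_sub_smul, hX, hY, mul_one] at h
  have : (0 : ℂ) ≤ ((1 - l : ℝ) : ℂ) := by push_cast; convert h using 1
  rw [Complex.zero_le_real] at this
  linarith

lemma bddAbove_set {X Y : Matrix (Fin D) (Fin D) ℂ} (hX : X.trace = 1) (hY : Y.trace = 1) :
    BddAbove {l : ℝ | (X - l • Y).PosSemidef} :=
  ⟨1, fun _ hl => mem_le_one hX hY hl⟩

lemma zero_mem {X Y : Matrix (Fin D) (Fin D) ℂ} (hX : X.PosSemidef) :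
    (0 : ℝ) ∈ {l : ℝ | (X - l • Y).PosSemidef} := by
  simpa using hX

lemma mfun_nonneg {X Y : Matrix (Fin D) (Fin D) ℂ} (hX : X.PosSemidef)
    (hXt : X.trace = 1) (hYt : Y.trace = 1) : 0 ≤ mfun X Y :=
  le_csSup (bddAbove_set hXt hYt) (zero_mem hX)

lemma mfun_le_one {X Y : Matrix (Fin D) (Fin D) ℂ} (hX : X.PosSemidef)
    (hXt : X.trace = 1) (hYt : Y.trace = 1) : mfun X Y ≤ 1 :=
  csSup_le ⟨0, zero_mem hX⟩ fun _ hl => mem_le_one hXt hYt hl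

/-- If Y is PSD but not PosDef and X is PosDef, then mfun Y X = 0. -/
lemma mfun_eq_zero {X Y : Matrix (Fin D) (Fin D) ℂ} (hX : X.PosDef) (hXt : X.trace = 1)
    (hY : Y.PosSemidef) (hYt : Y.trace = 1) (hnd : ¬ Y.PosDef) : mfun Y X = 0 := by
  -- find kernel-type vector
  obtain ⟨v, hv0, hv⟩ : ∃ v, v ≠ 0 ∧ star v ⬝ᵥ Y *ᵥ v = 0 := by
    by_contra h
    push_neg at h
    exact hnd (PosDef.of_dotProduct_mulVec_pos hY.1 fun x hx => lt_of_le_of_ne (hY.dotProduct_mulVec_nonneg x) (Ne.symm (h x hx)))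
  apply le_antisymm
  · apply csSup_le ⟨0, zero_mem hY⟩
    intro l hl
    by_contra hlpos
    push_neg at hlpos
    have h2 := hl.dotProduct_mulVec_nonneg v
    have hXv := hX.dotProduct_mulVec_pos hv0
    rw [sub_mulVec, dotProduct_sub, hv, smul_mulVec, dotProduct_smul,
      Complex.real_smul, zero_sub] at h2
    have h3 : 0 ≤ (-((l:ℂ) * (star v ⬝ᵥ X *ᵥ v))).re := h2.1
    have h4 : 0 < (star v ⬝ᵥ X *ᵥ v).re := hXv.1
    simp only [Complex.neg_re, Complex.mul_re, Complex.ofReal_re, Complex.ofReal_im,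
      zero_mul, sub_zero] at h3
    nlinarith
  · exact le_csSup (bddAbove_set hYt hXt) (zero_mem hY)

/-- spectral: M - c•1 is PSD if all eigenvalues ≥ c. -/
lemma sub_smul_one_psd {M : Matrix (Fin D) (Fin D) ℂ} (hM : M.IsHermitian) (c : ℝ)
    (h : ∀ i, c ≤ hM.eigenvalues i) : (M - c • 1).PosSemidef := by
  set U : Matrix (Fin D) (Fin D) ℂ := (hM.eigenvectorUnitary : Matrix (Fin D) (Fin D) ℂ)
  have hUU : U * star U = 1 := (Matrix.mem_unitaryGroup_iff).mp hM.eigenvectorUnitary.2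
  have key : M - c • 1 = U * diagonal (fun i => ((hM.eigenvalues i - c : ℝ) : ℂ)) * star U := by
    have h1 : M = U * diagonal (RCLike.ofReal ∘ hM.eigenvalues) * star U := hM.spectral_theorem
    have key2 : M - c • 1
        = U * (diagonal (RCLike.ofReal ∘ hM.eigenvalues) - c • 1) * star U := by
      rw [Matrix.mul_sub, Matrix.sub_mul, ← h1, Matrix.mul_smul, Matrix.smul_mul, mul_one, hUU]
    rw [key2]
    congr 2
    ext i j
    rcases eq_or_ne i j with rfl | hij
    · simp [Matrix.sub_apply, Matrix.smul_apply, Matrix.one_apply_eq, Complex.real_smul]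
    · simp [Matrix.sub_apply, Matrix.smul_apply, Matrix.one_apply_ne hij,
        diagonal_apply_ne _ hij]
  rw [key]
  have hd : (diagonal (fun i => ((hM.eigenvalues i - c : ℝ) : ℂ))).PosSemidef := by
    rw [posSemidef_diagonal_iff]
    intro i
    rw [Complex.zero_le_real]
    linarith [h i]
  have := hd.mul_mul_conjTranspose_same U
  rwa [← Matrix.star_eq_conjTranspose] at this

/-- spectral: c•1 - M is PSD if all eigenvalues ≤ c. -/
lemma smul_one_sub_psd {M : Matrix (Fin D) (Fin D) ℂ} (hM : M.IsHermitian) (c : ℝ)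
    (h : ∀ i, hM.eigenvalues i ≤ c) : (c • 1 - M).PosSemidef := by
  set U : Matrix (Fin D) (Fin D) ℂ := (hM.eigenvectorUnitary : Matrix (Fin D) (Fin D) ℂ)
  have hUU : U * star U = 1 := (Matrix.mem_unitaryGroup_iff).mp hM.eigenvectorUnitary.2
  have key : c • 1 - M = U * diagonal (fun i => ((c - hM.eigenvalues i : ℝ) : ℂ)) * star U := by
    have h1 : M = U * diagonal (RCLike.ofReal ∘ hM.eigenvalues) * star U := hM.spectral_theorem
    have key2 : c • 1 - M
        = U * (c • 1 - diagonal (RCLike.ofReal ∘ hM.eigenvalues)) * star U := by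
      rw [Matrix.mul_sub, Matrix.sub_mul, ← h1, Matrix.mul_smul, Matrix.smul_mul, mul_one, hUU]
    rw [key2]
    congr 2
    ext i j
    rcases eq_or_ne i j with rfl | hij
    · simp [Matrix.sub_apply, Matrix.smul_apply, Matrix.one_apply_eq, Complex.real_smul]
    · simp [Matrix.sub_apply, Matrix.smul_apply, Matrix.one_apply_ne hij,
        diagonal_apply_ne _ hij]
  rw [key]
  have hd : (diagonal (fun i => ((c - hM.eigenvalues i : ℝ) : ℂ))).PosSemidef := by
    rw [posSemidef_diagonal_iff]
    intro i
    rw [Complex.zero_le_real]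
    linarith [h i]
  have := hd.mul_mul_conjTranspose_same U
  rwa [← Matrix.star_eq_conjTranspose] at this

lemma trace_eq_sum_eigenvalues {M : Matrix (Fin D) (Fin D) ℂ} (hM : M.IsHermitian) :
    M.trace = ∑ i, (hM.eigenvalues i : ℂ) := by
  set U : Matrix (Fin D) (Fin D) ℂ := (hM.eigenvectorUnitary : Matrix (Fin D) (Fin D) ℂ)
  have hUU : star U * U = 1 := (Matrix.mem_unitaryGroup_iff').mp hM.eigenvectorUnitary.2
  have h1 : M = U * diagonal (RCLike.ofReal ∘ hM.eigenvalues) * star U := hM.spectral_theorem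
  conv_lhs => rw [h1]
  rw [Matrix.trace_mul_cycle]
  show Matrix.trace (star U * U * diagonal (RCLike.ofReal ∘ hM.eigenvalues)) = _
  rw [hUU, one_mul, trace_diagonal]
  rfl

/-- eigenvalues of trace-one PSD matrix are ≤ 1 -/
lemma eig_le_one {M : Matrix (Fin D) (Fin D) ℂ} (hM : M.PosSemidef) (hMt : M.trace = 1)
    (i : Fin D) : hM.1.eigenvalues i ≤ 1 := by
  have hsum : ∑ j, (hM.1.eigenvalues j : ℂ) = 1 := by
    rw [← trace_eq_sum_eigenvalues hM.1, hMt]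
  have hsumR : ∑ j, hM.1.eigenvalues j = 1 := by
    have : ((∑ j, hM.1.eigenvalues j : ℝ) : ℂ) = ((1 : ℝ) : ℂ) := by push_cast; simpa using hsum
    exact_mod_cast this
  calc hM.1.eigenvalues i ≤ ∑ j, hM.1.eigenvalues j :=
        Finset.single_le_sum (fun j _ => hM.eigenvalues_nonneg j) (Finset.mem_univ i)
    _ = 1 := hsumR

/-- core positivity: A, B PosDef with trace 1 → mfun A B > 0. -/
lemma mfun_pos (hD : 2 ≤ D) {A B : Matrix (Fin D) (Fin D) ℂ} (hA : A.PosDef) (hAt : A.trace = 1)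
    (hB : B.PosDef) (hBt : B.trace = 1) : 0 < mfun A B := by
  haveI : Nonempty (Fin D) := ⟨⟨0, by omega⟩⟩
  set μ := Finset.univ.inf' Finset.univ_nonempty hA.1.eigenvalues with hμ
  have hμpos : 0 < μ := by
    rw [hμ, Finset.lt_inf'_iff]
    exact fun i _ => hA.eigenvalues_pos i
  have h1 : (A - μ • 1).PosSemidef :=
    sub_smul_one_psd hA.1 μ fun i => Finset.inf'_le _ (Finset.mem_univ i)
  have h2 : ((1 : ℝ) • 1 - B).PosSemidef :=
    smul_one_sub_psd hB.1 1 (eig_le_one hB.posSemidef hBt)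
  have h3 : (μ • ((1:ℝ) • 1 - B)).PosSemidef := psd_smul h2 hμpos.le
  have h4 : (A - μ • B).PosSemidef := by
    have : A - μ • B = (A - μ • 1) + μ • ((1:ℝ) • (1 : Matrix (Fin D) (Fin D) ℂ) - B) := by
      rw [smul_sub, one_smul]
      abel
    rw [this]
    exact h1.add h3
  have : μ ∈ {l : ℝ | (A - l • B).PosSemidef} := h4
  exact lt_of_lt_of_le hμpos (le_csSup (bddAbove_set hAt hBt) this)

end Stmt8Aux

open Stmt8Aux
theorem stmt8 {D : ℕ} (hD : 2 ≤ D) :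
    (sSup {r : ℝ | ∃ X Y : Matrix (Fin D) (Fin D) ℂ, X.PosSemidef ∧ X.trace = 1 ∧
        Y.PosSemidef ∧ Y.trace = 1 ∧ r = dfun X Y} = 1) ∧
    (∀ X Y : Matrix (Fin D) (Fin D) ℂ, X.PosDef → X.trace = 1 →
      Y.PosSemidef → Y.trace = 1 → (dfun X Y = 1 ↔ ¬ Y.PosDef)) := by
  have part2 : ∀ X Y : Matrix (Fin D) (Fin D) ℂ, X.PosDef → X.trace = 1 →
      Y.PosSemidef → Y.trace = 1 → (dfun X Y = 1 ↔ ¬ Y.PosDef) := by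
    intro X Y hX hXt hY hYt
    constructor
    · intro hd hYd
      have h1 := mfun_pos hD hX hXt hYd hYt
      have h2 := mfun_pos hD hYd hYt hX hXt
      have hp : 0 < mfun X Y * mfun Y X := mul_pos h1 h2
      unfold dfun at hd
      rw [div_eq_one_iff_eq (by linarith)] at hd
      linarith
    · intro hYd
      have h0 : mfun Y X = 0 := mfun_eq_zero hX hXt hY hYt hYd
      unfold dfun
      rw [h0, mul_zero, sub_zero, add_zero, div_one]
  refine ⟨?_, part2⟩
  have hub : ∀ r ∈ {r : ℝ | ∃ X Y : Matrix (Fin D) (Fin D) ℂ, X.PosSemidef ∧ X.trace = 1 ∧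
      Y.PosSemidef ∧ Y.trace = 1 ∧ r = dfun X Y}, r ≤ 1 := by
    rintro r ⟨X, Y, hX, hXt, hY, hYt, rfl⟩
    have h1 : 0 ≤ mfun X Y := mfun_nonneg hX hXt hYt
    have h2 : 0 ≤ mfun Y X := mfun_nonneg hY hYt hXt
    have hp : 0 ≤ mfun X Y * mfun Y X := mul_nonneg h1 h2
    unfold dfun
    rw [div_le_one (by linarith)]
    linarith
  -- membership: construct X₀ pos def, Y₀ psd not pos def
  haveI : Nonempty (Fin D) := ⟨⟨0, by omega⟩⟩
  set X₀ : Matrix (Fin D) (Fin D) ℂ := ((D : ℝ)⁻¹) • 1 with hX₀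
  have hDpos : (0:ℝ) < D := by positivity
  have hX₀d : X₀.PosDef := posdef_smul Matrix.PosDef.one (by positivity)
  have hX₀t : X₀.trace = 1 := by
    rw [hX₀, trace_smul, trace_one, Complex.real_smul]
    push_cast
    rw [Fintype.card_fin]
    field_simp
  set Y₀ : Matrix (Fin D) (Fin D) ℂ :=
    diagonal (fun i => if i = ⟨0, by omega⟩ then (1:ℂ) else 0) with hY₀
  have hY₀psd : Y₀.PosSemidef := by
    rw [hY₀, posSemidef_diagonal_iff]
    intro i
    split <;> simp
  have hY₀t : Y₀.trace = 1 := by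
    rw [hY₀, trace_diagonal]
    simp
  have hY₀nd : ¬ Y₀.PosDef := by
    intro h
    have hv : (Pi.single (⟨1, by omega⟩ : Fin D) 1 : Fin D → ℂ) ≠ 0 := by
      intro hc
      have := congr_fun hc ⟨1, by omega⟩
      simp at this
    have := h.dotProduct_mulVec_pos hv
    rw [hY₀] at this
    have hne : (⟨1, by omega⟩ : Fin D) ≠ ⟨0, by omega⟩ := by simp [Fin.ext_iff]
    have hz : (diagonal (fun i : Fin D => if i = ⟨0, by omega⟩ then (1:ℂ) else 0)) *ᵥ
        (Pi.single (⟨1, by omega⟩ : Fin D) 1) = 0 := by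
      rw [diagonal_mulVec_single]
      simp [hne]
    rw [hz, dotProduct_zero] at this
    exact lt_irrefl _ this
  have hmem : (1:ℝ) ∈ {r : ℝ | ∃ X Y : Matrix (Fin D) (Fin D) ℂ, X.PosSemidef ∧ X.trace = 1 ∧
      Y.PosSemidef ∧ Y.trace = 1 ∧ r = dfun X Y} := by
    refine ⟨X₀, Y₀, hX₀d.posSemidef, hX₀t, hY₀psd, hY₀t, ?_⟩
    exact ((part2 X₀ Y₀ hX₀d hX₀t hY₀psd hY₀t).mpr hY₀nd).symm
  exact le_antisymm (csSup_le ⟨1, hmem⟩ hub) (le_csSup ⟨1, hub⟩ hmem)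
end

section
/- For X, Y positive semi-definite D×D trace-one matrices, d(X,Y) ≥ (1/2)·tr|X - Y|, i.e., the projective metric d dominates half the trace-norm distance. -/
open Matrix
open scoped ComplexOrder

/-- The trace norm `tr|M|`: the sum of the singular values of `M`. -/
noncomputable def traceNorm {D : ℕ} (M : Matrix (Fin D) (Fin D) ℂ) : ℝ :=
  ∑ i, Real.sqrt ((Matrix.isHermitian_conjTranspose_mul_self M).eigenvalues i)

section helpers

variable {D : ℕ}

private lemma uconj_mul (V : Matrix.unitaryGroup (Fin D) ℂ) (d e : Fin D → ℂ) :
    ((V : Matrix (Fin D) (Fin D) ℂ) * diagonal d * star (V : Matrix (Fin D) (Fin D) ℂ)) *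
      ((V : Matrix (Fin D) (Fin D) ℂ) * diagonal e * star (V : Matrix (Fin D) (Fin D) ℂ)) =
      (V : Matrix (Fin D) (Fin D) ℂ) * diagonal (d * e) * star (V : Matrix (Fin D) (Fin D) ℂ) := by
  have h : star (V : Matrix (Fin D) (Fin D) ℂ) * (V : Matrix (Fin D) (Fin D) ℂ) = 1 :=
    Unitary.coe_star_mul_self V
  simp only [mul_assoc]
  rw [← mul_assoc (star (V : Matrix (Fin D) (Fin D) ℂ)), h, one_mul,
    ← mul_assoc (diagonal d), diagonal_mul_diagonal]
  rfl

private lemma uconj_trace (V : Matrix.unitaryGroup (Fin D) ℂ) (d : Fin D → ℂ) :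
    ((V : Matrix (Fin D) (Fin D) ℂ) * diagonal d * star (V : Matrix (Fin D) (Fin D) ℂ)).trace
      = ∑ i, d i := by
  rw [trace_mul_cycle, Unitary.coe_star_mul_self V, one_mul, trace_diagonal]

private lemma uconj_psd (V : Matrix.unitaryGroup (Fin D) ℂ) {d : Fin D → ℂ} (hd : 0 ≤ d) :
    ((V : Matrix (Fin D) (Fin D) ℂ) * diagonal d *
      star (V : Matrix (Fin D) (Fin D) ℂ)).PosSemidef := by
  rw [Matrix.star_eq_conjTranspose]
  exact (Matrix.PosSemidef.diagonal hd).mul_mul_conjTranspose_same _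

private lemma traceNorm_of_hermitian {A : Matrix (Fin D) (Fin D) ℂ} (hA : A.IsHermitian) :
    traceNorm A = ∑ i, |hA.eigenvalues i| := by
  set B : Matrix (Fin D) (Fin D) ℂ := Aᴴ * A with hBdef
  have hB : B.IsHermitian := isHermitian_conjTranspose_mul_self A
  have hBpsd : B.PosSemidef := posSemidef_conjTranspose_mul_self A
  set W := hB.eigenvectorUnitary
  set V := hA.eigenvectorUnitary
  set ν : Fin D → ℝ := hB.eigenvalues with hν
  set μ : Fin D → ℝ := hA.eigenvalues with hμ
  set Q1 : Matrix (Fin D) (Fin D) ℂ :=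
    (W : Matrix (Fin D) (Fin D) ℂ) * diagonal (fun i => (Real.sqrt (ν i) : ℂ)) *
      star (W : Matrix (Fin D) (Fin D) ℂ) with hQ1
  set Q2 : Matrix (Fin D) (Fin D) ℂ :=
    (V : Matrix (Fin D) (Fin D) ℂ) * diagonal (fun i => ((|μ i| : ℝ) : ℂ)) *
      star (V : Matrix (Fin D) (Fin D) ℂ) with hQ2
  have hQ1psd : Q1.PosSemidef := uconj_psd W (fun i => by
    simp [Complex.zero_le_real, Real.sqrt_nonneg])
  have hQ2psd : Q2.PosSemidef := uconj_psd V (fun i => by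
    simp [Complex.zero_le_real, abs_nonneg])
  have hQ1sq : Q1 ^ 2 = B := by
    rw [pow_two, hQ1, uconj_mul]
    have : (fun i => (Real.sqrt (ν i) : ℂ)) * (fun i => (Real.sqrt (ν i) : ℂ))
        = fun i => (ν i : ℂ) := by
      funext i
      simp only [Pi.mul_apply, ← Complex.ofReal_mul,
        Real.mul_self_sqrt (hBpsd.eigenvalues_nonneg i)]
      exact congrArg _ (Real.mul_self_sqrt (hBpsd.eigenvalues_nonneg i))
    rw [this]
    exact hB.spectral_theorem.symm
  have hQ2sq : Q2 ^ 2 = B := by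
    rw [pow_two, hQ2, uconj_mul]
    have h1 : (fun i => ((|μ i| : ℝ) : ℂ)) * (fun i => ((|μ i| : ℝ) : ℂ))
        = (fun i => (μ i : ℂ)) * (fun i => (μ i : ℂ)) := by
      funext i
      simp only [Pi.mul_apply, ← Complex.ofReal_mul, abs_mul_abs_self]
    rw [h1, ← uconj_mul]
    have h2 : (V : Matrix (Fin D) (Fin D) ℂ) * diagonal (fun i => (μ i : ℂ)) *
        star (V : Matrix (Fin D) (Fin D) ℂ) = A := by
      have := hA.spectral_theorem
      rw [Unitary.conjStarAlgAut_apply] at this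
      exact this.symm
    rw [h2, hBdef, hA.eq]
  have hQ : Q1 = Q2 := by
    open scoped MatrixOrder in
    exact (CFC.sq_eq_sq_iff Q1 Q2 hQ1psd.nonneg hQ2psd.nonneg).mp (by rw [hQ1sq, hQ2sq])
  have ht : (∑ i, (Real.sqrt (ν i) : ℂ)) = ∑ i, ((|μ i| : ℝ) : ℂ) := by
    rw [← uconj_trace W, ← uconj_trace V, ← hQ1, ← hQ2, hQ]
  have h3 : ((∑ i, Real.sqrt (ν i) : ℝ) : ℂ) = ((∑ i, |μ i| : ℝ) : ℂ) := by
    push_cast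
    exact ht
  have := Complex.ofReal_inj.mp h3
  simpa [traceNorm] using this

private lemma sum_dot_eq_trace {A : Matrix (Fin D) (Fin D) ℂ} (hA : A.IsHermitian)
    (M : Matrix (Fin D) (Fin D) ℂ) :
    ∑ i, star (⇑(hA.eigenvectorBasis i)) ⬝ᵥ (M *ᵥ ⇑(hA.eigenvectorBasis i)) = M.trace := by
  have key : ∀ i, star (⇑(hA.eigenvectorBasis i)) ⬝ᵥ (M *ᵥ ⇑(hA.eigenvectorBasis i))
      = (star (hA.eigenvectorUnitary : Matrix (Fin D) (Fin D) ℂ) * M *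
          (hA.eigenvectorUnitary : Matrix (Fin D) (Fin D) ℂ)) i i := by
    intro i
    simp only [mul_apply, dotProduct, mulVec, Matrix.star_eq_conjTranspose,
      conjTranspose_apply, IsHermitian.eigenvectorUnitary_apply, Pi.star_apply,
      Finset.mul_sum, Finset.sum_mul]
    rw [Finset.sum_comm]
    refine Finset.sum_congr rfl fun k _ => Finset.sum_congr rfl fun l _ => by ring
  rw [Finset.sum_congr rfl (fun i _ => key i)]
  have : ∑ i, (star (hA.eigenvectorUnitary : Matrix (Fin D) (Fin D) ℂ) * M *
      (hA.eigenvectorUnitary : Matrix (Fin D) (Fin D) ℂ)) i i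
      = (star (hA.eigenvectorUnitary : Matrix (Fin D) (Fin D) ℂ) * M *
        (hA.eigenvectorUnitary : Matrix (Fin D) (Fin D) ℂ)).trace := rfl
  rw [this, trace_mul_cycle, Matrix.mem_unitaryGroup_iff.mp hA.eigenvectorUnitary.2, one_mul]

private lemma sum_abs_eig_le {A P N : Matrix (Fin D) (Fin D) ℂ} (hA : A.IsHermitian)
    (hP : P.PosSemidef) (hN : N.PosSemidef) (hPN : A = P - N) :
    ∑ i, |hA.eigenvalues i| ≤ (P.trace + N.trace).re := by
  have step : ∀ i, |hA.eigenvalues i| ≤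
      (star (⇑(hA.eigenvectorBasis i)) ⬝ᵥ (P *ᵥ ⇑(hA.eigenvectorBasis i))).re +
      (star (⇑(hA.eigenvectorBasis i)) ⬝ᵥ (N *ᵥ ⇑(hA.eigenvectorBasis i))).re := by
    intro i
    have he := hA.eigenvalues_eq i
    have hsplit : star (⇑(hA.eigenvectorBasis i)) ⬝ᵥ (P *ᵥ ⇑(hA.eigenvectorBasis i)) -
        star (⇑(hA.eigenvectorBasis i)) ⬝ᵥ (N *ᵥ ⇑(hA.eigenvectorBasis i)) =
        star (⇑(hA.eigenvectorBasis i)) ⬝ᵥ (A *ᵥ ⇑(hA.eigenvectorBasis i)) := by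
      rw [← dotProduct_sub, ← sub_mulVec, ← hPN]
    have hp : 0 ≤ (star (⇑(hA.eigenvectorBasis i)) ⬝ᵥ (P *ᵥ ⇑(hA.eigenvectorBasis i))).re := by
      simpa using hP.re_dotProduct_nonneg (⇑(hA.eigenvectorBasis i))
    have hn : 0 ≤ (star (⇑(hA.eigenvectorBasis i)) ⬝ᵥ (N *ᵥ ⇑(hA.eigenvectorBasis i))).re := by
      simpa using hN.re_dotProduct_nonneg (⇑(hA.eigenvectorBasis i))
    have heq : hA.eigenvalues i =
        (star (⇑(hA.eigenvectorBasis i)) ⬝ᵥ (P *ᵥ ⇑(hA.eigenvectorBasis i))).re -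
        (star (⇑(hA.eigenvectorBasis i)) ⬝ᵥ (N *ᵥ ⇑(hA.eigenvectorBasis i))).re := by
      simp only [he, ← hsplit, map_sub, RCLike.re_to_complex, Complex.sub_re]
    rw [heq]
    exact (abs_sub _ _).trans (by rw [abs_of_nonneg hp, abs_of_nonneg hn])
  calc ∑ i, |hA.eigenvalues i| ≤
      ∑ i, ((star (⇑(hA.eigenvectorBasis i)) ⬝ᵥ (P *ᵥ ⇑(hA.eigenvectorBasis i))).re +
      (star (⇑(hA.eigenvectorBasis i)) ⬝ᵥ (N *ᵥ ⇑(hA.eigenvectorBasis i))).re) :=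
        Finset.sum_le_sum fun i _ => step i
    _ = (P.trace + N.trace).re := by
        rw [Finset.sum_add_distrib, ← Complex.re_sum, ← Complex.re_sum,
          sum_dot_eq_trace hA P, sum_dot_eq_trace hA N, Complex.add_re]

private lemma psd_trace_nonneg {M : Matrix (Fin D) (Fin D) ℂ} (hM : M.PosSemidef) :
    0 ≤ M.trace := by
  rw [Matrix.trace]
  refine Finset.sum_nonneg fun i _ => ?_
  have h := hM.dotProduct_mulVec_nonneg (Pi.single i 1)
  have e : star (Pi.single i 1 : Fin D → ℂ) ⬝ᵥ (M *ᵥ Pi.single i 1) = M.diag i := by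
    simp [dotProduct, mulVec, Pi.single_apply, Matrix.diag]
  rwa [e] at h

private lemma psd_real_smul {M : Matrix (Fin D) (Fin D) ℂ} (hM : M.PosSemidef) {c : ℝ}
    (hc : 0 ≤ c) : (c • M).PosSemidef := by
  refine .of_dotProduct_mulVec_nonneg ?_ fun x => ?_
  · show (c • M)ᴴ = c • M
    rw [conjTranspose_smul, star_trivial, hM.1.eq]
  · have : star x ⬝ᵥ (c • M) *ᵥ x = (c : ℂ) * (star x ⬝ᵥ M *ᵥ x) := by
      rw [smul_mulVec, dotProduct_smul]
      simp [Complex.real_smul]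
    rw [this]
    exact mul_nonneg (by simpa using Complex.zero_le_real.mpr hc) (hM.dotProduct_mulVec_nonneg x)

end helpers

theorem stmt9 {D : ℕ} (X Y : Matrix (Fin D) (Fin D) ℂ)
    (hX : X.PosSemidef) (hY : Y.PosSemidef)
    (hXt : X.trace = 1) (hYt : Y.trace = 1) :
    (1 / 2) * traceNorm (X - Y) ≤ dfun X Y := by
  have hAh : (X - Y).IsHermitian := hX.1.sub hY.1
  have htn : traceNorm (X - Y) = ∑ i, |hAh.eigenvalues i| := traceNorm_of_hermitian hAh
  have htn0 : 0 ≤ traceNorm (X - Y) :=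
    Finset.sum_nonneg fun i _ => Real.sqrt_nonneg _
  -- any admissible l is at most 1
  have hle1 : ∀ l : ℝ, (X - l • Y).PosSemidef → l ≤ 1 := by
    intro l hl
    have h0 := psd_trace_nonneg hl
    rw [trace_sub, trace_smul, hXt, hYt] at h0
    have h1 : (0 : ℂ) ≤ ((1 - l : ℝ) : ℂ) := by
      convert h0 using 1
      push_cast
      rw [Complex.real_smul]
      ring
    linarith [Complex.zero_le_real.mp h1]
  have hle1' : ∀ l : ℝ, (Y - l • X).PosSemidef → l ≤ 1 := by
    intro l hl
    have h0 := psd_trace_nonneg hl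
    rw [trace_sub, trace_smul, hXt, hYt] at h0
    have h1 : (0 : ℂ) ≤ ((1 - l : ℝ) : ℂ) := by
      convert h0 using 1
      push_cast
      rw [Complex.real_smul]
      ring
    linarith [Complex.zero_le_real.mp h1]
  -- the key trace-norm bounds
  have keyXY : ∀ l : ℝ, (X - l • Y).PosSemidef → traceNorm (X - Y) ≤ 2 * (1 - l) := by
    intro l hl
    have hl1 := hle1 l hl
    have hNpsd : ((1 - l) • Y).PosSemidef := psd_real_smul hY (by linarith)
    have hdecomp : X - Y = (X - l • Y) - ((1 - l) • Y) := by
      rw [sub_smul, one_smul]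
      abel
    have hb := sum_abs_eig_le hAh hl hNpsd hdecomp
    rw [← htn] at hb
    have hPt : (X - l • Y).trace = 1 - (l : ℂ) := by
      rw [trace_sub, trace_smul, hXt, hYt, Complex.real_smul, mul_one]
    have hNt : ((1 - l) • Y).trace = ((1 - l : ℝ) : ℂ) := by
      rw [trace_smul, hYt, Complex.real_smul, mul_one]
    rw [hPt, hNt] at hb
    have : ((1 : ℂ) - (l : ℂ) + ((1 - l : ℝ) : ℂ)).re = 2 * (1 - l) := by
      push_cast
      simp
      ring
    rw [this] at hb
    exact hb
  have keyYX : ∀ l : ℝ, (Y - l • X).PosSemidef → traceNorm (X - Y) ≤ 2 * (1 - l) := by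
    intro l hl
    have hl1 := hle1' l hl
    have hPpsd : ((1 - l) • X).PosSemidef := psd_real_smul hX (by linarith)
    have hdecomp : X - Y = ((1 - l) • X) - (Y - l • X) := by
      rw [sub_smul, one_smul]
      abel
    have hb := sum_abs_eig_le hAh hPpsd hl hdecomp
    rw [← htn] at hb
    have hPt : ((1 - l) • X).trace = ((1 - l : ℝ) : ℂ) := by
      rw [trace_smul, hXt, Complex.real_smul, mul_one]
    have hNt : (Y - l • X).trace = 1 - (l : ℂ) := by
      rw [trace_sub, trace_smul, hXt, hYt, Complex.real_smul, mul_one]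
    rw [hPt, hNt] at hb
    have : (((1 - l : ℝ) : ℂ) + ((1 : ℂ) - (l : ℂ))).re = 2 * (1 - l) := by
      push_cast
      simp
      ring
    rw [this] at hb
    exact hb
  -- properties of the suprema
  have hS0 : (0 : ℝ) ∈ {l : ℝ | (X - l • Y).PosSemidef} := by
    show (X - (0 : ℝ) • Y).PosSemidef
    simpa using hX
  have hT0 : (0 : ℝ) ∈ {l : ℝ | (Y - l • X).PosSemidef} := by
    show (Y - (0 : ℝ) • X).PosSemidef
    simpa using hY
  have hSb : BddAbove {l : ℝ | (X - l • Y).PosSemidef} := ⟨1, fun l hl => hle1 l hl⟩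
  have hTb : BddAbove {l : ℝ | (Y - l • X).PosSemidef} := ⟨1, fun l hl => hle1' l hl⟩
  have hm0 : 0 ≤ mfun X Y := le_csSup hSb hS0
  have hn0 : 0 ≤ mfun Y X := le_csSup hTb hT0
  have hm : mfun X Y ≤ 1 - (1 / 2) * traceNorm (X - Y) := by
    refine csSup_le ⟨0, hS0⟩ fun l hl => ?_
    have := keyXY l hl
    linarith
  have hn : mfun Y X ≤ 1 - (1 / 2) * traceNorm (X - Y) := by
    refine csSup_le ⟨0, hT0⟩ fun l hl => ?_
    have := keyYX l hl
    linarith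
  -- final arithmetic
  have hden : 0 < 1 + mfun X Y * mfun Y X := by positivity
  rw [dfun, le_div_iff₀ hden]
  nlinarith [mul_nonneg hm0 (sq_nonneg (1 - mfun Y X)),
    mul_nonneg hn0 (sq_nonneg (1 - mfun X Y)),
    mul_nonneg (mul_nonneg hm0 hn0) htn0, mul_nonneg hm0 hn0]
end

section
/- Let φ be a positive linear map on D×D complex matrices such that no nonzero positive semi-definite matrix lies in the kernel of φ or of its Hilbert–Schmidt adjoint φ*. Then φ maps positive definite matrices to positive definite matrices. -/
open Matrix
open scoped ComplexOrder

section aux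
variable {n : Type*} [Fintype n] [DecidableEq n]

omit [DecidableEq n] in
lemma trace_mul_vecMulVec (X : Matrix n n ℂ) (v : n → ℂ) :
    (X * vecMulVec v (star v)).trace = star v ⬝ᵥ X *ᵥ v := by
  simp only [trace, diag_apply, mul_apply, vecMulVec_apply, Pi.star_apply, dotProduct, mulVec,
    Finset.mul_sum]
  refine Finset.sum_congr rfl fun i _ => Finset.sum_congr rfl fun j _ => ?_
  ring

omit [DecidableEq n] in
lemma vecMulVec_posSemidef (v : n → ℂ) : (vecMulVec v (star v)).PosSemidef := by
  rw [posSemidef_iff_dotProduct_mulVec]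
  constructor
  · ext i j
    simp [vecMulVec_apply, conjTranspose_apply, mul_comm]
  · intro x
    have : star x ⬝ᵥ (vecMulVec v (star v)) *ᵥ x
        = star (star v ⬝ᵥ x) * (star v ⬝ᵥ x) := by
      simp only [dotProduct, mulVec, vecMulVec_apply, Pi.star_apply, star_sum, star_mul',
        star_star, Finset.sum_mul, Finset.mul_sum]
      rw [Finset.sum_comm]
      refine Finset.sum_congr rfl fun i _ => Finset.sum_congr rfl fun j _ => ?_
      ring
    rw [this]
    exact star_mul_self_nonneg _

open scoped MatrixOrder in
lemma posSemidef_iff_eq_transpose_mul_self {A : Matrix n n ℂ} :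
    A.PosSemidef ↔ ∃ B : Matrix n n ℂ, A = Bᴴ * B :=
  ⟨fun h => by
    obtain ⟨B, hB⟩ := CStarAlgebra.nonneg_iff_eq_star_mul_self.mp h.nonneg
    exact ⟨B, hB⟩, fun ⟨B, hB⟩ => hB ▸ posSemidef_conjTranspose_mul_self B⟩

lemma psd_diag_nonneg {A : Matrix n n ℂ} (hA : A.PosSemidef) (i : n) : 0 ≤ A i i := by
  have := hA.dotProduct_mulVec_nonneg (Pi.single i 1)
  simpa [mulVec_single, dotProduct, Pi.single_apply, Finset.sum_ite_eq] using this

lemma psd_trace_nonneg_s10 {A : Matrix n n ℂ} (hA : A.PosSemidef) : 0 ≤ A.trace :=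
  Finset.sum_nonneg fun i _ => psd_diag_nonneg hA i

lemma trace_psd_mul_psd_nonneg {A B : Matrix n n ℂ} (hA : A.PosSemidef) (hB : B.PosSemidef) :
    0 ≤ (A * B).trace := by
  obtain ⟨R, hR⟩ := posSemidef_iff_eq_transpose_mul_self.mp hA
  rw [hR, Matrix.mul_assoc, trace_mul_comm]
  exact psd_trace_nonneg_s10 (hB.mul_mul_conjTranspose_same R)

lemma posSemidef_of_dotProduct_nonneg {X : Matrix n n ℂ}
    (h : ∀ w : n → ℂ, 0 ≤ star w ⬝ᵥ X *ᵥ w) : X.PosSemidef := by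
  have hstar : ∀ w : n → ℂ, star (star w ⬝ᵥ X *ᵥ w) = star w ⬝ᵥ Xᴴ *ᵥ w := by
    intro w
    simp only [dotProduct, mulVec, star_sum, star_mul', star_star, conjTranspose_apply,
      Pi.star_apply, Finset.mul_sum]
    rw [Finset.sum_comm]
    refine Finset.sum_congr rfl fun i _ => Finset.sum_congr rfl fun j _ => ?_
    ring
  have hq : ∀ w : n → ℂ, star w ⬝ᵥ (X - Xᴴ) *ᵥ w = 0 := by
    intro w
    have h2 : star (star w ⬝ᵥ X *ᵥ w) = star w ⬝ᵥ X *ᵥ w := by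
      obtain ⟨hre, him⟩ := Complex.nonneg_iff.mp (h w)
      simp [Complex.ext_iff, ← him]
    rw [sub_mulVec, dotProduct_sub, ← hstar, h2, sub_self]
  have hB : ∀ v w : n → ℂ, star v ⬝ᵥ (X - Xᴴ) *ᵥ w = 0 := by
    intro v w
    have e1 := hq (v + w)
    have e2 := hq (v + Complex.I • w)
    simp only [star_add, star_smul, add_dotProduct, dotProduct_add, mulVec_add, mulVec_smul,
      smul_dotProduct, dotProduct_smul, smul_eq_mul, Complex.star_def, Complex.conj_I,
      hq v, hq w, add_zero, zero_add] at e1 e2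
    have h2a : (2 * Complex.I) * (star v ⬝ᵥ (X - Xᴴ) *ᵥ w) = 0 := by
      linear_combination e2 + Complex.I * e1
    rcases mul_eq_zero.mp h2a with h' | h'
    · exact absurd h' (by simp [Complex.I_ne_zero])
    · exact h'
  have hY0 : X - Xᴴ = 0 := by
    ext i j
    have := hB (Pi.single i 1) (Pi.single j 1)
    simpa [mulVec_single, dotProduct, Pi.single_apply, Finset.sum_ite_eq] using this
  exact posSemidef_iff_dotProduct_mulVec.mpr ⟨(sub_eq_zero.mp hY0).symm, h⟩

end aux

theorem stmt10 {D : ℕ}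
    (φ φs : Matrix (Fin D) (Fin D) ℂ →ₗ[ℂ] Matrix (Fin D) (Fin D) ℂ)
    (hadj : ∀ A B : Matrix (Fin D) (Fin D) ℂ, (Aᴴ * φ B).trace = ((φs A)ᴴ * B).trace)
    (hpos : ∀ M : Matrix (Fin D) (Fin D) ℂ, M.PosSemidef → (φ M).PosSemidef)
    (hker : ∀ M : Matrix (Fin D) (Fin D) ℂ, M.PosSemidef → φ M = 0 → M = 0)
    (hkers : ∀ M : Matrix (Fin D) (Fin D) ℂ, M.PosSemidef → φs M = 0 → M = 0) :
    ∀ M : Matrix (Fin D) (Fin D) ℂ, M.PosDef → (φ M).PosDef := by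
  have hspos : ∀ A : Matrix (Fin D) (Fin D) ℂ, A.PosSemidef → (φs A).PosSemidef := by
    intro A hA
    have key : ((φs A)ᴴ).PosSemidef := by
      apply posSemidef_of_dotProduct_nonneg
      intro w
      have h1 := hadj A (vecMulVec w (star w))
      rw [hA.isHermitian.eq] at h1
      rw [trace_mul_vecMulVec ((φs A)ᴴ) w] at h1
      rw [← h1]
      exact trace_psd_mul_psd_nonneg hA (hpos _ (vecMulVec_posSemidef w))
    simpa using key.conjTranspose
  intro M hM
  have hφM := hpos M hM.posSemidef
  refine posDef_iff_dotProduct_mulVec.mpr ⟨hφM.1, fun x hx => ?_⟩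
  rcases (hφM.dotProduct_mulVec_nonneg x).lt_or_eq with hlt | heq
  · exact hlt
  exfalso
  have hP : (vecMulVec x (star x)).PosSemidef := vecMulVec_posSemidef x
  have htr0 : ((φs (vecMulVec x (star x)))ᴴ * M).trace = 0 := by
    rw [← hadj _ M, hP.isHermitian.eq, trace_mul_comm, trace_mul_vecMulVec, ← heq]
  have hQ : (φs (vecMulVec x (star x))).PosSemidef := hspos _ hP
  obtain ⟨R, hR⟩ := posSemidef_iff_eq_transpose_mul_self.mp hQ
  have htr : (R * M * Rᴴ).trace = 0 := by
    rw [← htr0, hQ.isHermitian.eq, hR, trace_mul_cycle]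
  have hdiag : ∀ i, (R * M * Rᴴ) i i = 0 := by
    have hpsd := hM.posSemidef.mul_mul_conjTranspose_same R
    simp only [trace, diag_apply] at htr
    intro i
    have hnn : ∀ j ∈ Finset.univ, 0 ≤ (R * M * Rᴴ) j j := fun j _ => psd_diag_nonneg hpsd j
    exact (Finset.sum_eq_zero_iff_of_nonneg hnn).mp htr i (Finset.mem_univ i)
  have hR0 : R = 0 := by
    ext i j
    simp only [Matrix.zero_apply]
    by_contra hij
    have hy : star (R i) ≠ 0 := by
      intro hc
      exact hij (by simpa using congrArg star (congrFun hc j))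
    have hquad := hM.dotProduct_mulVec_pos hy
    have hform : star (star (R i)) ⬝ᵥ M *ᵥ star (R i) = (R * M * Rᴴ) i i := by
      simp only [mul_apply, dotProduct, mulVec, conjTranspose_apply, Pi.star_apply, star_star,
        Finset.mul_sum, Finset.sum_mul]
      rw [Finset.sum_comm]
      refine Finset.sum_congr rfl fun a _ => Finset.sum_congr rfl fun b _ => ?_
      ring
    rw [hform, hdiag i] at hquad
    exact lt_irrefl _ hquad
  have hQ0 : φs (vecMulVec x (star x)) = 0 := by rw [hR, hR0]; simp
  have hP0 : vecMulVec x (star x) = 0 := hkers _ hP hQ0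
  obtain ⟨i, hi⟩ := Function.ne_iff.mp hx
  have hPi : vecMulVec x (star x) i i = 0 := by rw [hP0]; rfl
  simp only [vecMulVec_apply, Pi.star_apply] at hPi
  rcases mul_eq_zero.mp hPi with h | h
  · exact hi h
  · exact hi (by simpa using congrArg star h)
end

section
/- A positive linear map φ on D×D complex matrices is strictly positive if and only if its Hilbert–Schmidt adjoint φ* is strictly positive. -/
open Matrix
open scoped ComplexOrder

private lemma psd_of_nonneg {n : Type*} [Fintype n] [DecidableEq n]
    {M : Matrix n n ℂ} (h : ∀ x : n → ℂ, 0 ≤ star x ⬝ᵥ M *ᵥ x) : M.PosSemidef := by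
  refine posSemidef_iff_dotProduct_mulVec.mpr ⟨?_, h⟩
  rw [Matrix.isHermitian_iff_isSymmetric, LinearMap.isSymmetric_iff_inner_map_self_real]
  intro v
  obtain ⟨x, rfl⟩ := (WithLp.equiv 2 (n → ℂ)).symm.surjective v
  simp only [WithLp.equiv_symm_apply, toEuclideanLin_toLp, EuclideanSpace.inner_toLp_toLp, toLin'_apply]
  have him : (star x ⬝ᵥ M *ᵥ x).im = 0 := by
    have h0 := h x
    rw [Complex.le_def] at h0
    simpa using h0.2.symm
  rw [dotProduct_comm x, star_dotProduct (M *ᵥ x) x]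
  have hc : (starRingEnd ℂ) (star x ⬝ᵥ M *ᵥ x) = star x ⬝ᵥ M *ᵥ x :=
    Complex.conj_eq_iff_im.mpr him
  simp only [Complex.star_def, hc]

private lemma psd_vecMulVec {n : Type*} [Fintype n] (x : n → ℂ) :
    (vecMulVec x (star x)).PosSemidef := by
  rw [vecMulVec_eq (ι := Unit), ← conjTranspose_replicateCol]
  exact posSemidef_self_mul_conjTranspose _

open scoped MatrixOrder in
private lemma trace_pos_of_psd_posdef {n : Type*} [Fintype n] [DecidableEq n]
    {M P : Matrix n n ℂ} (hM : M.PosSemidef) (hM0 : M ≠ 0) (hP : P.PosDef) :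
    0 < (M * P).trace := by
  set S := CFC.sqrt M with hSdef
  have hSsq : S * S = M := CFC.sqrt_mul_sqrt_self M hM.nonneg
  have hSherm : S.IsHermitian := (CFC.sqrt_nonneg M).posSemidef.1
  have hS0 : S ≠ 0 := fun h => hM0 (by rw [← hSsq, h, mul_zero])
  have htr : (M * P).trace = (S * P * S).trace := by
    rw [← hSsq, mul_assoc, trace_mul_comm, mul_assoc]
  rw [htr]
  have hdiag : ∀ i, (S * P * S) i i =
      star (fun a => S a i) ⬝ᵥ P *ᵥ (fun a => S a i) := by
    intro i
    have : S * P * S = Sᴴ * P * S := by rw [hSherm.eq]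
    rw [this]
    simp only [mul_apply, conjTranspose_apply, dotProduct, mulVec, dotProduct,
      Finset.sum_mul, Finset.mul_sum, Pi.star_apply]
    rw [Finset.sum_comm]
    refine Finset.sum_congr rfl fun a _ => Finset.sum_congr rfl fun b _ => by ring
  rw [Matrix.trace]
  obtain ⟨a, b, hab⟩ : ∃ a b, S a b ≠ 0 := by
    by_contra h
    push_neg at h
    exact hS0 (by ext i j; simpa using h i j)
  have hnonneg : ∀ i ∈ Finset.univ, 0 ≤ (S * P * S).diag i := fun i _ => by
    rw [diag_apply, hdiag i]; exact hP.posSemidef.dotProduct_mulVec_nonneg _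
  have hposb : 0 < (S * P * S).diag b := by
    rw [diag_apply, hdiag b]
    exact hP.dotProduct_mulVec_pos (fun h => hab (by simpa using congrFun h a))
  exact Finset.sum_pos' hnonneg ⟨b, Finset.mem_univ b, hposb⟩

private lemma key {D : ℕ} (f g : Matrix (Fin D) (Fin D) ℂ →ₗ[ℂ] Matrix (Fin D) (Fin D) ℂ)
    (hadj : ∀ A B : Matrix (Fin D) (Fin D) ℂ, (Aᴴ * f B).trace = ((g A)ᴴ * B).trace)
    (hf : ∀ M : Matrix (Fin D) (Fin D) ℂ, M.PosSemidef → M ≠ 0 → (f M).PosDef) :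
    ∀ M : Matrix (Fin D) (Fin D) ℂ, M.PosSemidef → M ≠ 0 → (g M).PosDef := by
  intro M hM hM0
  have hq : ∀ x : Fin D → ℂ, x ≠ 0 → 0 < star x ⬝ᵥ (g M) *ᵥ x := by
    intro x hx
    have h1 := hadj M (vecMulVec x (star x))
    rw [hM.1.eq] at h1
    have h2 : ((g M)ᴴ * vecMulVec x (star x)).trace = star (star x ⬝ᵥ (g M) *ᵥ x) := by
      simp only [trace, diag_apply, mul_apply, vecMulVec_apply, dotProduct, mulVec, dotProduct,
        conjTranspose_apply, Pi.star_apply, Finset.sum_mul, Finset.mul_sum, star_sum, star_mul']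
      rw [Finset.sum_comm]
      refine Finset.sum_congr rfl fun a _ => Finset.sum_congr rfl fun b _ => by
        simp [star_star]; ring
    have hvne : vecMulVec x (star x) ≠ 0 := by
      obtain ⟨i, hi⟩ := Function.ne_iff.mp hx
      intro h
      apply hi
      have := congrFun (congrFun h i) i
      simp only [vecMulVec_apply, Pi.star_apply, Matrix.zero_apply] at this
      exact by simpa using (mul_eq_zero.mp this).elim id (fun h' => by simpa using h')
    have hpos : 0 < (M * f (vecMulVec x (star x))).trace :=
      trace_pos_of_psd_posdef hM hM0 (hf _ (psd_vecMulVec x) hvne)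
    rw [h1, h2] at hpos
    have him : (star x ⬝ᵥ (g M) *ᵥ x).im = 0 := by
      have h := hpos.le
      rw [Complex.le_def] at h
      have h2 := h.2.symm
      simpa [Complex.star_def] using h2
    have heq : star (star x ⬝ᵥ (g M) *ᵥ x) = star x ⬝ᵥ (g M) *ᵥ x := by
      rw [Complex.star_def]; exact Complex.conj_eq_iff_im.mpr him
    rwa [heq] at hpos
  have hsd : (g M).PosSemidef := by
    refine psd_of_nonneg fun x => ?_
    by_cases hx : x = 0
    · simp [hx]
    · exact (hq x hx).le
  exact PosDef.of_dotProduct_mulVec_pos hsd.1 fun x hx => hq x hx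

theorem stmt12 {D : ℕ}
    (φ φs : Matrix (Fin D) (Fin D) ℂ →ₗ[ℂ] Matrix (Fin D) (Fin D) ℂ)
    (hadj : ∀ A B : Matrix (Fin D) (Fin D) ℂ, (Aᴴ * φ B).trace = ((φs A)ᴴ * B).trace)
    (hpos : ∀ M : Matrix (Fin D) (Fin D) ℂ, M.PosSemidef → (φ M).PosSemidef) :
    (∀ M : Matrix (Fin D) (Fin D) ℂ, M.PosSemidef → M ≠ 0 → (φ M).PosDef) ↔
    (∀ M : Matrix (Fin D) (Fin D) ℂ, M.PosSemidef → M ≠ 0 → (φs M).PosDef) := by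
  have e1 : ∀ X Y : Matrix (Fin D) (Fin D) ℂ, (Xᴴ * Y).trace = star ((Yᴴ * X).trace) := by
    intro X Y
    rw [← trace_conjTranspose, conjTranspose_mul, conjTranspose_conjTranspose]
  have hadj' : ∀ A B : Matrix (Fin D) (Fin D) ℂ, (Aᴴ * φs B).trace = ((φ A)ᴴ * B).trace := by
    intro A B
    rw [e1 A (φs B), ← hadj B A, ← e1 (φ A) B]
  exact ⟨fun h => key φ φs hadj h, fun h => key φs φ hadj' h⟩
end

section
/- Under the same hypotheses, c(φ) ≤ 1, and c(φ) < 1 if and only if φ is strictly positive (i.e., maps every nonzero positive semi-definite matrix to a positive definite matrix). -/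
open Matrix
open scoped ComplexOrder

/-- The projective action `φ·X = φ(X)/tr(φ(X))`. -/
noncomputable def projAct {D : ℕ}
    (φ : Matrix (Fin D) (Fin D) ℂ →ₗ[ℂ] Matrix (Fin D) (Fin D) ℂ)
    (X : Matrix (Fin D) (Fin D) ℂ) : Matrix (Fin D) (Fin D) ℂ :=
  ((φ X).trace)⁻¹ • φ X

/-- The contraction coefficient `c(φ) = sup {d(φ·X, φ·Y) : X, Y ∈ 𝕊_D}`. -/
noncomputable def contr {D : ℕ}
    (φ : Matrix (Fin D) (Fin D) ℂ →ₗ[ℂ] Matrix (Fin D) (Fin D) ℂ) : ℝ :=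
  sSup {r : ℝ | ∃ X Y : Matrix (Fin D) (Fin D) ℂ, X.PosSemidef ∧ X.trace = 1 ∧
    Y.PosSemidef ∧ Y.trace = 1 ∧ r = dfun (projAct φ X) (projAct φ Y)}



namespace Stmt15Aux

variable {D : ℕ}

abbrev Mat (D : ℕ) := Matrix (Fin D) (Fin D) ℂ

/-- quadratic form -/
noncomputable def Q (M : Mat D) (v : Fin D → ℂ) : ℂ := star v ⬝ᵥ M *ᵥ v

noncomputable def nsq (v : Fin D → ℂ) : ℝ := ∑ i, Complex.normSq (v i)

lemma nsq_nonneg (v : Fin D → ℂ) : 0 ≤ nsq v :=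
  Finset.sum_nonneg fun i _ => Complex.normSq_nonneg _

lemma nsq_eq_zero {v : Fin D → ℂ} (h : nsq v = 0) : v = 0 := by
  funext i
  have := (Finset.sum_eq_zero_iff_of_nonneg (fun i _ => Complex.normSq_nonneg (v i))).1 h i
    (Finset.mem_univ i)
  exact Complex.normSq_eq_zero.1 this

lemma Q_real {M : Mat D} (hM : M.PosSemidef) (v : Fin D → ℂ) :
    Q M v = ((Q M v).re : ℂ) := by
  have := hM.dotProduct_mulVec_nonneg v
  rw [Complex.nonneg_iff] at this
  exact Complex.ext (by simp) (by simp [Q, ← this.2])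

lemma Q_re_nonneg {M : Mat D} (hM : M.PosSemidef) (v : Fin D → ℂ) : 0 ≤ (Q M v).re :=
  hM.re_dotProduct_nonneg v

lemma real_smul_eq (l : ℝ) (M : Mat D) : l • M = (l : ℂ) • M := by
  rw [← algebraMap_smul ℂ l M, Complex.coe_algebraMap]

lemma psd_smul {M : Mat D} (hM : M.PosSemidef) {c : ℝ} (hc : 0 ≤ c) :
    ((c : ℂ) • M).PosSemidef := by
  refine PosSemidef.of_dotProduct_mulVec_nonneg ?_ ?_
  · rw [IsHermitian, conjTranspose_smul, hM.1.eq, Complex.star_def, Complex.conj_ofReal]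
  · intro x
    rw [smul_mulVec, dotProduct_smul]
    have h0 : (0:ℂ) ≤ star x ⬝ᵥ M *ᵥ x := hM.dotProduct_mulVec_nonneg x
    calc (0:ℂ) = (c:ℂ) • 0 := by simp
    _ ≤ (c:ℂ) • (star x ⬝ᵥ M *ᵥ x) := by
        apply smul_le_smul_of_nonneg_left h0
        rw [Complex.nonneg_iff]; simp [hc]

lemma Q_smul (c : ℂ) (M : Mat D) (v : Fin D → ℂ) : Q (c • M) v = c * Q M v := by
  simp [Q, smul_mulVec, dotProduct_smul, smul_eq_mul]

lemma Q_sub (A B : Mat D) (v : Fin D → ℂ) : Q (A - B) v = Q A v - Q B v := by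
  simp [Q, sub_mulVec, dotProduct_sub]

lemma trace_real {M : Mat D} (hM : M.PosSemidef) :
    M.trace = ((M.trace.re : ℝ) : ℂ) ∧ 0 ≤ M.trace.re := by
  have h : ∀ i : Fin D, (0:ℂ) ≤ M i i := by
    intro i
    have := hM.dotProduct_mulVec_nonneg (Pi.single i 1)
    simpa [dotProduct, Pi.single_apply, mulVec, apply_ite, Finset.sum_ite_eq] using this
  have htr : (0:ℂ) ≤ M.trace := by
    rw [Matrix.trace]
    exact Finset.sum_nonneg fun i _ => h i
  rw [Complex.nonneg_iff] at htr
  exact ⟨Complex.ext (by simp) (by simp [← htr.2]), htr.1⟩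

end Stmt15Aux

namespace Stmt15Aux
variable {D : ℕ}

open scoped MatrixOrder in
lemma posSemidef_iff_eq_transpose_mul_self {A : Mat D} :
    A.PosSemidef ↔ ∃ B : Mat D, A = Bᴴ * B := by
  constructor
  · intro hA
    exact CStarAlgebra.nonneg_iff_eq_star_mul_self.mp hA.nonneg
  · rintro ⟨B, rfl⟩
    exact posSemidef_conjTranspose_mul_self B

lemma trace_re_pos {M : Mat D} (hM : M.PosSemidef) (hM0 : M ≠ 0) : 0 < M.trace.re := by
  rcases lt_or_eq_of_le (trace_real hM).2 with h | h
  · exact h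
  · exfalso
    apply hM0
    obtain ⟨B, rfl⟩ := posSemidef_iff_eq_transpose_mul_self.mp hM
    have htr : (Bᴴ * B).trace.re = ∑ i, ∑ j, Complex.normSq (B j i) := by
      simp [Matrix.trace, Matrix.diag, Matrix.mul_apply, Complex.normSq_apply,
        Matrix.conjTranspose_apply]
    have hB : B = 0 := by
      have hz : ∑ i, ∑ j, Complex.normSq (B j i) = 0 := by rw [← htr, ← h]
      funext j i
      have h1 := (Finset.sum_eq_zero_iff_of_nonneg (fun i _ =>
        Finset.sum_nonneg fun j _ => Complex.normSq_nonneg (B j i))).1 hz i (Finset.mem_univ i)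
      have h2 := (Finset.sum_eq_zero_iff_of_nonneg (fun j _ =>
        Complex.normSq_nonneg (B j i))).1 h1 j (Finset.mem_univ j)
      simpa using Complex.normSq_eq_zero.1 h2
    rw [hB]; simp

/-- outer product `v vᴴ` -/
def outer (v : Fin D → ℂ) : Mat D := Matrix.vecMulVec v (star v)

lemma outer_hermitian (v : Fin D → ℂ) : (outer v).IsHermitian := by
  ext i j
  simp [outer, Matrix.vecMulVec_apply, Matrix.conjTranspose_apply, mul_comm]

lemma outer_psd (v : Fin D → ℂ) : (outer v).PosSemidef := by
  refine PosSemidef.of_dotProduct_mulVec_nonneg (outer_hermitian v) fun x => ?_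
  have : star x ⬝ᵥ (outer v) *ᵥ x = star (star v ⬝ᵥ x) * (star v ⬝ᵥ x) := by
    simp only [outer, dotProduct, mulVec, Matrix.vecMulVec_apply, Pi.star_apply, star_sum,
      star_mul', star_star]
    rw [Finset.sum_mul_sum]
    refine Finset.sum_congr rfl fun i _ => ?_
    rw [Finset.mul_sum]
    exact Finset.sum_congr rfl fun j _ => by ring
  rw [this]
  exact star_mul_self_nonneg _

lemma outer_eq_zero {v : Fin D → ℂ} (h : outer v = 0) : v = 0 := by
  funext i
  have := congrFun (congrFun h i) i
  simp only [outer, Matrix.vecMulVec_apply, Pi.star_apply, Matrix.zero_apply] at this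
  rcases mul_eq_zero.mp this with h | h
  · exact h
  · simpa using h

lemma trace_outer_mul (v : Fin D → ℂ) (W : Mat D) :
    ((outer v) * W).trace = star v ⬝ᵥ W *ᵥ v := by
  simp only [Matrix.trace, Matrix.diag, Matrix.mul_apply, outer, Matrix.vecMulVec_apply,
    dotProduct, mulVec, Pi.star_apply]
  rw [Finset.sum_comm]
  congr 1; funext j
  rw [Finset.mul_sum]
  congr 1; funext i
  ring

end Stmt15Aux

namespace Stmt15Aux
variable {D : ℕ}

lemma Q_conj (M : Mat D) (v : Fin D → ℂ) : star (Q M v) = Q Mᴴ v := by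
  rw [Q, star_dotProduct, star_star, star_mulVec, Q, dotProduct_mulVec]

lemma psd_iff (M : Mat D) :
    M.PosSemidef ↔ (M.IsHermitian ∧ ∀ v, 0 ≤ (Q M v).re) := by
  constructor
  · exact fun h => ⟨h.1, fun v => Q_re_nonneg h v⟩
  · rintro ⟨h1, h2⟩
    refine PosSemidef.of_dotProduct_mulVec_nonneg h1 fun x => ?_
    have hreal : star (Q M x) = Q M x := by rw [Q_conj, h1.eq]
    have him : (Q M x).im = 0 := by
      have := congrArg Complex.im hreal
      simp only [Complex.star_def, Complex.conj_im] at this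
      linarith
    rw [show star x ⬝ᵥ M *ᵥ x = Q M x from rfl, Complex.nonneg_iff]
    exact ⟨h2 x, him.symm⟩

/-- Cauchy–Schwarz-type bound: `re (v* B v) ≤ tr(B) ‖v‖²` for `B` PSD. -/
lemma Q_le_trace_nsq {B : Mat D} (hB : B.PosSemidef) (v : Fin D → ℂ) :
    (Q B v).re ≤ B.trace.re * nsq v := by
  obtain ⟨C, rfl⟩ := posSemidef_iff_eq_transpose_mul_self.mp hB
  have hQ : (Q (Cᴴ * C) v).re = ∑ i, Complex.normSq ((C *ᵥ v) i) := by
    have : Q (Cᴴ * C) v = star (C *ᵥ v) ⬝ᵥ (C *ᵥ v) := by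
      rw [Q, ← Matrix.mulVec_mulVec, dotProduct_mulVec, vecMul_conjTranspose, star_star]
    rw [this]
    simp [dotProduct, Complex.normSq_apply, Complex.mul_re]
  have htr : (Cᴴ * C).trace.re = ∑ i, ∑ j, Complex.normSq (C i j) := by
    rw [show (∑ i : Fin D, ∑ j : Fin D, Complex.normSq (C i j))
        = ∑ j : Fin D, ∑ i : Fin D, Complex.normSq (C i j) from Finset.sum_comm]
    simp [Matrix.trace, Matrix.diag, Matrix.mul_apply, Complex.normSq_apply,
      Matrix.conjTranspose_apply]
  rw [hQ, htr, Finset.sum_mul]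
  apply Finset.sum_le_sum
  intro i _
  -- normSq ((C *ᵥ v) i) ≤ (∑ j, normSq (C i j)) * nsq v
  have h1 : ‖(C *ᵥ v) i‖ ≤ ∑ j, ‖C i j‖ * ‖v j‖ := by
    rw [mulVec, dotProduct]
    refine (norm_sum_le _ _).trans ?_
    apply le_of_eq
    exact Finset.sum_congr rfl fun j _ => norm_mul _ _
  have h2 : (∑ j, ‖C i j‖ * ‖v j‖)^2 ≤
      (∑ j, ‖C i j‖^2) * (∑ j, ‖v j‖^2) :=
    Finset.sum_mul_sq_le_sq_mul_sq _ _ _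
  have h3 : Complex.normSq ((C *ᵥ v) i) ≤ (∑ j, ‖C i j‖^2) * (∑ j, ‖v j‖^2) := by
    rw [← Complex.sq_norm]
    refine le_trans ?_ h2
    apply pow_le_pow_left₀ (norm_nonneg _) h1
  refine h3.trans (le_of_eq ?_)
  rw [nsq]
  congr 1
  · exact Finset.sum_congr rfl fun j _ => (Complex.sq_norm _)
  · exact Finset.sum_congr rfl fun j _ => (Complex.sq_norm _)

/-- Complex polarization: if the quadratic form vanishes everywhere, the matrix is zero. -/
lemma eq_zero_of_Q_eq_zero {N : Mat D} (h : ∀ v, Q N v = 0) : N = 0 := by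
  have hT : ∀ x : EuclideanSpace ℂ (Fin D), inner ℂ (Matrix.toEuclideanLin N x) x = (0 : ℂ) := by
    intro x
    have hx := h ((WithLp.equiv 2 (Fin D → ℂ)) x)
    rw [Q] at hx
    have : (inner ℂ (Matrix.toEuclideanLin N x) x : ℂ) =
        star (star ((WithLp.equiv 2 (Fin D → ℂ)) x) ⬝ᵥ N *ᵥ ((WithLp.equiv 2 (Fin D → ℂ)) x)) := by
      rw [EuclideanSpace.inner_eq_star_dotProduct, star_dotProduct, star_star, dotProduct_comm]; rfl
    rw [this, hx, star_zero]
  have := (inner_map_self_eq_zero (Matrix.toEuclideanLin N)).1 hT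
  have h2 : Matrix.toEuclideanLin (N) = Matrix.toEuclideanLin (0 : Mat D) := by
    rw [this]; simp
  exact Matrix.toEuclideanLin.injective h2

end Stmt15Aux

namespace Stmt15Aux
variable {D : ℕ}

def mset (A B : Mat D) : Set ℝ := {l : ℝ | (A - l • B).PosSemidef}

lemma mfun_def (A B : Mat D) : mfun A B = sSup (mset A B) := rfl

lemma zero_mem_mset {A : Mat D} (B : Mat D) (hA : A.PosSemidef) : (0:ℝ) ∈ mset A B := by
  simp [mset, hA]

lemma Q_mem_bound {A B : Mat D} {l : ℝ} (hl : l ∈ mset A B) (v : Fin D → ℂ) :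
    l * (Q B v).re ≤ (Q A v).re := by
  have h := Q_re_nonneg hl v
  rw [show A - l • B = A - (l:ℂ) • B by rw [real_smul_eq], Q_sub, Q_smul] at h
  simp only [Complex.sub_re, Complex.mul_re, Complex.ofReal_re, Complex.ofReal_im] at h
  linarith

lemma mset_bddAbove {A B : Mat D} {v : Fin D → ℂ} (hv : 0 < (Q B v).re) :
    BddAbove (mset A B) := by
  refine ⟨(Q A v).re / (Q B v).re, fun l hl => ?_⟩
  rw [le_div_iff₀ hv]
  exact Q_mem_bound hl v

lemma mfun_nonneg {A : Mat D} (B : Mat D) (hA : A.PosSemidef) : 0 ≤ mfun A B := by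
  by_cases h : BddAbove (mset A B)
  · exact le_csSup h (zero_mem_mset B hA)
  · rw [mfun_def, Real.sSup_of_not_bddAbove h]

lemma le_mfun {A B : Mat D} {l : ℝ} (hbdd : BddAbove (mset A B)) (hl : l ∈ mset A B) :
    l ≤ mfun A B := le_csSup hbdd hl

lemma mfun_le {A B : Mat D} (hA : A.PosSemidef) {v : Fin D → ℂ} (hv : 0 < (Q B v).re) :
    mfun A B ≤ (Q A v).re / (Q B v).re := by
  refine csSup_le ⟨0, zero_mem_mset B hA⟩ fun l hl => ?_
  rw [le_div_iff₀ hv]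
  exact Q_mem_bound hl v

lemma exists_Q_pos {B : Mat D} (hB : B.PosSemidef) (hB0 : B ≠ 0) :
    ∃ v, 0 < (Q B v).re := by
  by_contra h
  push_neg at h
  apply hB0
  apply eq_zero_of_Q_eq_zero
  intro v
  have h1 : (Q B v).re = 0 := le_antisymm (h v) (Q_re_nonneg hB v)
  rw [Q_real hB v, h1]
  simp

lemma projAct_spec {φ : Mat D →ₗ[ℂ] Mat D} {X : Mat D}
    (hφX : (φ X).PosSemidef) (hφX0 : φ X ≠ 0) :
    (projAct φ X).PosSemidef ∧ (projAct φ X).trace = 1 ∧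
      projAct φ X = ((((φ X).trace.re)⁻¹ : ℝ) : ℂ) • φ X := by
  have htr := trace_real hφX
  have hpos := trace_re_pos hφX hφX0
  have hne : (φ X).trace ≠ 0 := by
    rw [htr.1]
    exact_mod_cast ne_of_gt hpos
  have heq : projAct φ X = ((((φ X).trace.re)⁻¹ : ℝ) : ℂ) • φ X := by
    rw [projAct, htr.1]
    norm_cast
  refine ⟨?_, ?_, heq⟩
  · rw [heq]; exact psd_smul hφX (inv_nonneg.2 hpos.le)
  · rw [projAct, Matrix.trace_smul, smul_eq_mul, inv_mul_cancel₀ hne]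

end Stmt15Aux

namespace Stmt15Aux
variable {D : ℕ}

def cset (φ : Mat D →ₗ[ℂ] Mat D) : Set ℝ :=
  {r : ℝ | ∃ X Y : Mat D, X.PosSemidef ∧ X.trace = 1 ∧
    Y.PosSemidef ∧ Y.trace = 1 ∧ r = dfun (projAct φ X) (projAct φ Y)}

lemma contr_def (φ : Mat D →ₗ[ℂ] Mat D) : contr φ = sSup (cset φ) := rfl

lemma dfun_le_one {A B : Mat D} (hA : A.PosSemidef) (hB : B.PosSemidef) : dfun A B ≤ 1 := by
  have h1 : 0 ≤ mfun A B := mfun_nonneg B hA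
  have h2 : 0 ≤ mfun B A := mfun_nonneg A hB
  have ht : 0 ≤ mfun A B * mfun B A := mul_nonneg h1 h2
  rw [dfun, div_le_one (by linarith)]
  linarith

lemma trace_one_ne_zero {X : Mat D} (hX : X.trace = 1) : X ≠ 0 := by
  intro h
  rw [h] at hX
  simp at hX

lemma cset_le_one {φ : Mat D →ₗ[ℂ] Mat D}
    (hpos : ∀ M : Mat D, M.PosSemidef → (φ M).PosSemidef)
    (hker : ∀ M : Mat D, M.PosSemidef → φ M = 0 → M = 0) :
    ∀ r ∈ cset φ, r ≤ 1 := by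
  rintro r ⟨X, Y, hX, hX1, hY, hY1, rfl⟩
  have hφX0 : φ X ≠ 0 := fun h => trace_one_ne_zero hX1 (hker X hX h)
  have hφY0 : φ Y ≠ 0 := fun h => trace_one_ne_zero hY1 (hker Y hY h)
  exact dfun_le_one (projAct_spec (hpos X hX) hφX0).1 (projAct_spec (hpos Y hY) hφY0).1

lemma contr_le_one {φ : Mat D →ₗ[ℂ] Mat D}
    (hpos : ∀ M : Mat D, M.PosSemidef → (φ M).PosSemidef)
    (hker : ∀ M : Mat D, M.PosSemidef → φ M = 0 → M = 0) :
    contr φ ≤ 1 :=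
  Real.sSup_le (cset_le_one hpos hker) zero_le_one

end Stmt15Aux

namespace Stmt15Aux
variable {D : ℕ}

lemma normalize_spec {X : Mat D} (hX : X.PosSemidef) (hX0 : X ≠ 0) :
    (((X.trace.re⁻¹ : ℝ) : ℂ) • X).PosSemidef ∧ (((X.trace.re⁻¹ : ℝ) : ℂ) • X).trace = 1 := by
  have htr := trace_real hX
  have hpos := trace_re_pos hX hX0
  refine ⟨psd_smul hX (inv_nonneg.2 hpos.le), ?_⟩
  rw [Matrix.trace_smul, smul_eq_mul, htr.1]
  simp only [Complex.ofReal_re, ← Complex.ofReal_mul, inv_mul_cancel₀ (ne_of_gt hpos),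
    Complex.ofReal_one]

lemma one_mem_cset {φ φs : Mat D →ₗ[ℂ] Mat D}
    (hadj : ∀ A B : Mat D, (Aᴴ * φ B).trace = ((φs A)ᴴ * B).trace)
    (hpos : ∀ M : Mat D, M.PosSemidef → (φ M).PosSemidef)
    (hker : ∀ M : Mat D, M.PosSemidef → φ M = 0 → M = 0)
    (hkers : ∀ M : Mat D, M.PosSemidef → φs M = 0 → M = 0)
    {M : Mat D} (hM : M.PosSemidef) (hM0 : M ≠ 0) (hnd : ¬ (φ M).PosDef) :
    (1:ℝ) ∈ cset φ := by
  have hφM := hpos M hM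
  -- find the null vector v
  have hv : ∃ v, v ≠ 0 ∧ Q (φ M) v = 0 := by
    rw [Matrix.posDef_iff_dotProduct_mulVec] at hnd
    push_neg at hnd
    obtain ⟨x, hx0, hx⟩ := hnd hφM.1
    exact ⟨x, hx0, ((hφM.dotProduct_mulVec_nonneg x).eq_or_lt.resolve_right hx).symm⟩
  obtain ⟨v, hv0, hvQ⟩ := hv
  -- find Y₀ with (Q (φ Y₀) v).re > 0
  have hY0 : ∃ Y0 : Mat D, Y0.PosSemidef ∧ 0 < (Q (φ Y0) v).re := by
    by_contra h
    push_neg at h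
    have hQ0 : ∀ Y : Mat D, Y.PosSemidef → Q (φ Y) v = 0 := by
      intro Y hY
      have h1 : (Q (φ Y) v).re = 0 := le_antisymm (h Y hY) (Q_re_nonneg (hpos Y hY) v)
      rw [Q_real (hpos Y hY) v, h1, Complex.ofReal_zero]
    have hN : ∀ u, Q (φs (outer v))ᴴ u = 0 := by
      intro u
      have h1 := hadj (outer v) (outer u)
      rw [(outer_hermitian v).eq] at h1
      rw [trace_outer_mul] at h1
      have h2 : star v ⬝ᵥ φ (outer u) *ᵥ v = Q (φ (outer u)) v := rfl
      rw [h2, hQ0 _ (outer_psd u)] at h1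
      have h3 : ((φs (outer v))ᴴ * outer u).trace = Q (φs (outer v))ᴴ u := by
        rw [Matrix.trace_mul_comm, trace_outer_mul]; rfl
      rw [h3] at h1
      exact h1.symm
    have : (φs (outer v))ᴴ = 0 := eq_zero_of_Q_eq_zero hN
    have : φs (outer v) = 0 := by
      have := congrArg Matrix.conjTranspose this
      simpa using this
    exact hv0 (outer_eq_zero (hkers _ (outer_psd v) this))
  obtain ⟨Y0, hY0psd, hY0Q⟩ := hY0
  have hY00 : Y0 ≠ 0 := by
    intro h
    rw [h, map_zero] at hY0Q
    simp [Q] at hY0Q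
  -- normalized states
  set X : Mat D := ((M.trace.re⁻¹ : ℝ) : ℂ) • M with hXdef
  set Y : Mat D := ((Y0.trace.re⁻¹ : ℝ) : ℂ) • Y0 with hYdef
  obtain ⟨hXpsd, hXtr⟩ := normalize_spec hM hM0
  obtain ⟨hYpsd, hYtr⟩ := normalize_spec hY0psd hY00
  have hφX0 : φ X ≠ 0 := fun h => trace_one_ne_zero hXtr (hker X hXpsd h)
  have hφY0 : φ Y ≠ 0 := fun h => trace_one_ne_zero hYtr (hker Y hYpsd h)
  obtain ⟨hApsd, hAtr, hAeq⟩ := projAct_spec (hpos X hXpsd) hφX0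
  obtain ⟨hBpsd, hBtr, hBeq⟩ := projAct_spec (hpos Y hYpsd) hφY0
  set A := projAct φ X
  set B := projAct φ Y
  -- Q A v = 0
  have hQA : (Q A v).re = 0 := by
    have h1 : φ X = ((M.trace.re⁻¹ : ℝ) : ℂ) • φ M := by rw [hXdef]; exact φ.map_smul _ _
    have : Q A v = ((((φ X).trace.re)⁻¹ : ℝ) : ℂ) * (((M.trace.re⁻¹ : ℝ) : ℂ) * Q (φ M) v) := by
      rw [hAeq, Q_smul, h1, Q_smul]
    rw [this, hvQ]
    simp
  -- (Q B v).re > 0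
  have hQB : 0 < (Q B v).re := by
    have h1 : φ Y = ((Y0.trace.re⁻¹ : ℝ) : ℂ) • φ Y0 := by rw [hYdef]; exact φ.map_smul _ _
    have h2 : Q B v = ((((φ Y).trace.re)⁻¹ : ℝ) : ℂ) * (((Y0.trace.re⁻¹ : ℝ) : ℂ) * Q (φ Y0) v) := by
      rw [hBeq, Q_smul, h1, Q_smul]
    have hc1 : 0 < (φ Y).trace.re := trace_re_pos (hpos Y hYpsd) hφY0
    have hc2 : 0 < Y0.trace.re := trace_re_pos hY0psd hY00
    have hre : ∀ (a : ℝ) (z : ℂ), ((a:ℂ) * z).re = a * z.re := by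
      intro a z
      simp [Complex.mul_re]
    rw [h2, hre, hre]
    exact mul_pos (inv_pos.2 hc1) (mul_pos (inv_pos.2 hc2) hY0Q)
  have hm : mfun A B = 0 := by
    refine le_antisymm ?_ (mfun_nonneg _ hApsd)
    have := mfun_le hApsd hQB
    rwa [hQA, zero_div] at this
  refine ⟨X, Y, hXpsd, hXtr, hYpsd, hYtr, ?_⟩
  rw [dfun, hm, zero_mul]
  norm_num

end Stmt15Aux

namespace Stmt15Aux
variable {D : ℕ}

lemma re_ofReal_mul' (a : ℝ) (z : ℂ) : ((a:ℂ) * z).re = a * z.re := by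
  simp [Complex.mul_re]

lemma nsq_smul (r : ℝ) (v : Fin D → ℂ) : nsq ((r:ℂ) • v) = r^2 * nsq v := by
  simp only [nsq, Pi.smul_apply, smul_eq_mul, _root_.map_mul, Complex.normSq_ofReal, Finset.mul_sum]
  exact Finset.sum_congr rfl fun i _ => by ring

lemma Q_smul_vec (M : Mat D) (c : ℂ) (v : Fin D → ℂ) :
    Q M (c • v) = star c * c * Q M v := by
  rw [Q, Matrix.mulVec_smul, star_smul, smul_dotProduct, dotProduct_smul]
  simp only [smul_eq_mul, Q]; ring

lemma Q_single_single (X : Mat D) (i j : Fin D) (a b : ℂ) :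
    star (Pi.single i a) ⬝ᵥ X *ᵥ (Pi.single j b) = star a * X i j * b := by
  rw [Matrix.mulVec_single]
  rw [← Pi.single_star, single_dotProduct]
  simp [mul_assoc]

lemma continuous_entry (i j : Fin D) : Continuous fun X : Mat D => X i j :=
  (continuous_apply j).comp (continuous_apply i)

lemma continuous_Q_left (v : Fin D → ℂ) : Continuous fun X : Mat D => Q X v := by
  unfold Q dotProduct mulVec
  refine continuous_finset_sum _ fun i _ => Continuous.mul continuous_const ?_
  exact continuous_finset_sum _ fun j _ => (continuous_entry i j).mul continuous_const

lemma continuous_trace' : Continuous fun X : Mat D => X.trace := by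
  unfold Matrix.trace Matrix.diag
  exact continuous_finset_sum _ fun i _ => continuous_entry i i

lemma continuous_conjT : Continuous fun X : Mat D => Xᴴ := by
  refine continuous_matrix fun i j => ?_
  exact Complex.continuous_conj.comp (continuous_entry j i)

lemma isClosed_S : IsClosed {X : Mat D | X.PosSemidef ∧ X.trace = 1} := by
  have h1 : {X : Mat D | X.PosSemidef ∧ X.trace = 1} =
      ({X : Mat D | Xᴴ = X} ∩ ⋂ v : Fin D → ℂ, {X | 0 ≤ (Q X v).re}) ∩ {X | X.trace = 1} := by
    ext X
    simp only [Set.mem_setOf_eq, Set.mem_inter_iff, Set.mem_iInter]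
    constructor
    · rintro ⟨hX, htr⟩
      exact ⟨⟨hX.1, fun v => Q_re_nonneg hX v⟩, htr⟩
    · rintro ⟨⟨h1, h2⟩, htr⟩
      exact ⟨(psd_iff X).2 ⟨h1, h2⟩, htr⟩
  rw [h1]
  refine IsClosed.inter (IsClosed.inter ?_ ?_) ?_
  · exact isClosed_eq continuous_conjT continuous_id
  · exact isClosed_iInter fun v => isClosed_le continuous_const
      (Complex.continuous_re.comp (continuous_Q_left v))
  · exact isClosed_eq continuous_trace' continuous_const

end Stmt15Aux

namespace Stmt15Aux
variable {D : ℕ}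

lemma diag_nonneg {X : Mat D} (hX : X.PosSemidef) (i : Fin D) : (0:ℂ) ≤ X i i := by
  have := hX.dotProduct_mulVec_nonneg (Pi.single i 1)
  simpa [dotProduct, Pi.single_apply, mulVec, apply_ite, Finset.sum_ite_eq] using this

lemma diag_re_le_trace {X : Mat D} (hX : X.PosSemidef) (i : Fin D) :
    (X i i).re ≤ X.trace.re := by
  have h : X.trace.re = ∑ k, (X k k).re := by
    simp [Matrix.trace, Matrix.diag, Complex.re_sum]
  rw [h]
  exact Finset.single_le_sum (fun k _ => (Complex.nonneg_iff.1 (diag_nonneg hX k)).1)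
    (Finset.mem_univ i)

lemma offdiag_re_le_trace {X : Mat D} (hX : X.PosSemidef) {i j : Fin D} (hij : i ≠ j) :
    (X i i).re + (X j j).re ≤ X.trace.re := by
  have h : X.trace.re = ∑ k, (X k k).re := by
    simp [Matrix.trace, Matrix.diag, Complex.re_sum]
  rw [h]
  have : (X i i).re + (X j j).re = ∑ k ∈ ({i, j} : Finset (Fin D)), (X k k).re := by
    rw [Finset.sum_insert (by simp [hij]), Finset.sum_singleton]
  rw [this]
  exact Finset.sum_le_sum_of_subset_of_nonneg (Finset.subset_univ _)
    (fun k _ _ => (Complex.nonneg_iff.1 (diag_nonneg hX k)).1)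

lemma entry_abs_le {X : Mat D} (hX : X.PosSemidef) (htr : X.trace = 1) (i j : Fin D) :
    ‖X i j‖ ≤ 1 := by
  have htre : X.trace.re = 1 := by rw [htr]; simp
  by_cases hij : i = j
  · subst hij
    have h0 := diag_nonneg hX i
    rw [Complex.nonneg_iff] at h0
    have : ‖X i i‖ = (X i i).re := by
      rw [Complex.norm_def, Complex.normSq_apply, ← h0.2]
      simp [Real.sqrt_mul_self h0.1]
    rw [this]
    exact (diag_re_le_trace hX i).trans_eq htre
  · by_cases h0 : X i j = 0
    · simp [h0]
    set c : ℂ := -(star (X i j)) / (‖X i j‖) with hc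
    have habs : ‖X i j‖ ≠ 0 := by simpa using h0
    set v : Fin D → ℂ := Pi.single i 1 + Pi.single j c with hv
    have hQ : Q X v = star (1:ℂ) * X i i * 1 + star (1:ℂ) * X i j * c
        + star c * X j i * 1 + star c * X j j * c := by
      rw [Q, hv, star_add, add_dotProduct, Matrix.mulVec_add, dotProduct_add, dotProduct_add,
        Q_single_single, Q_single_single, Q_single_single, Q_single_single]
      ring
    have hji : X j i = star (X i j) := by
      have := hX.1.eq
      conv_lhs => rw [← this]
      simp [Matrix.conjTranspose_apply]
    have hterm1 : X i j * c = -(‖X i j‖ : ℂ) := by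
      rw [hc]
      field_simp
      rw [Complex.star_def, Complex.mul_conj]
      rw [Complex.normSq_eq_norm_sq]
      push_cast
      ring
    have hterm2 : star c * X j i = -(‖X i j‖ : ℂ) := by
      rw [hji, hc]
      simp only [star_div₀, star_neg, star_star]
      field_simp
      rw [Complex.star_def, Complex.conj_ofReal, Complex.mul_conj,
        Complex.normSq_eq_norm_sq]
      push_cast
      rw [pow_two, mul_div_assoc, div_self (by exact_mod_cast habs), mul_one]
    have hterm3 : star c * X j j * c = X j j := by
      have hnsq : Complex.normSq c = 1 := by
        rw [hc]
        rw [map_div₀]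
        simp only [Complex.normSq_neg, Complex.normSq_conj, Complex.normSq_ofReal]
        rw [Complex.normSq_eq_norm_sq]
        field_simp
        rw [norm_star]
      have hcabs : star c * c = 1 := by
        rw [Complex.star_def, ← Complex.normSq_eq_conj_mul_self, hnsq, Complex.ofReal_one]
      calc star c * X j j * c = (star c * c) * X j j := by ring
      _ = X j j := by rw [hcabs, one_mul]
    have hQ2 : Q X v = X i i + X j j - 2 * (‖X i j‖ : ℂ) := by
      rw [hQ]
      simp only [star_one, one_mul, mul_one]
      rw [hterm1, hterm2, hterm3]
      ring
    have hre := Q_re_nonneg hX v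
    rw [hQ2] at hre
    simp only [Complex.sub_re, Complex.add_re, Complex.mul_re, Complex.ofReal_re,
      Complex.ofReal_im] at hre
    have hd := offdiag_re_le_trace hX hij
    rw [htre] at hd
    norm_num at hre
    linarith

end Stmt15Aux

namespace Stmt15Aux
variable {D : ℕ}

lemma isCompact_S : IsCompact {X : Mat D | X.PosSemidef ∧ X.trace = 1} := by
  have hsub : {X : Mat D | X.PosSemidef ∧ X.trace = 1} ⊆
      Set.univ.pi fun _ : Fin D => Set.univ.pi fun _ : Fin D => Metric.closedBall (0:ℂ) 1 := by
    rintro X ⟨hX, htr⟩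
    intro i _
    intro j _
    rw [Metric.mem_closedBall, dist_zero_right]
    exact entry_abs_le hX htr i j
  have hK : IsCompact (Set.univ.pi fun _ : Fin D =>
      Set.univ.pi fun _ : Fin D => Metric.closedBall (0:ℂ) 1) :=
    isCompact_univ_pi fun _ => isCompact_univ_pi fun _ => isCompact_closedBall 0 1
  exact hK.of_isClosed_subset isClosed_S hsub

lemma continuous_nsq : Continuous fun v : Fin D → ℂ => nsq v := by
  unfold nsq
  exact continuous_finset_sum _ fun i _ =>
    Complex.continuous_normSq.comp (continuous_apply i)

lemma isCompact_V : IsCompact {v : Fin D → ℂ | nsq v = 1} := by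
  have hsub : {v : Fin D → ℂ | nsq v = 1} ⊆
      Set.univ.pi fun _ : Fin D => Metric.closedBall (0:ℂ) 1 := by
    intro v hv i _
    rw [Metric.mem_closedBall, dist_zero_right]
    have h1 : Complex.normSq (v i) ≤ 1 := by
      rw [← hv]
      exact Finset.single_le_sum (fun k _ => Complex.normSq_nonneg (v k)) (Finset.mem_univ i)
    have h2 : ‖v i‖^2 ≤ 1 := by rwa [← Complex.sq_norm] at h1
    nlinarith [norm_nonneg (v i)]
  have hK : IsCompact (Set.univ.pi fun _ : Fin D => Metric.closedBall (0:ℂ) 1) :=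
    isCompact_univ_pi fun _ => isCompact_closedBall 0 1
  refine hK.of_isClosed_subset ?_ hsub
  exact isClosed_eq continuous_nsq continuous_const

lemma continuous_f (φ : Mat D →ₗ[ℂ] Mat D) :
    Continuous fun p : Mat D × (Fin D → ℂ) => (Q (φ p.1) p.2).re := by
  have hφ : Continuous fun X : Mat D => φ X := φ.continuous_of_finiteDimensional
  refine Complex.continuous_re.comp ?_
  unfold Q dotProduct mulVec
  refine continuous_finset_sum _ fun i _ => Continuous.mul ?_ ?_
  · exact continuous_star.comp ((continuous_apply i).comp continuous_snd)
  · refine continuous_finset_sum _ fun j _ => Continuous.mul ?_ ?_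
    · exact ((continuous_entry i j).comp hφ).comp continuous_fst
    · exact (continuous_apply j).comp continuous_snd

end Stmt15Aux

namespace Stmt15Aux
variable {D : ℕ}

lemma herm_real_smul {B : Mat D} (hB : B.IsHermitian) (l : ℝ) : (l • B).IsHermitian := by
  rw [real_smul_eq]
  show ((l:ℂ) • B)ᴴ = (l:ℂ) • B
  rw [Matrix.conjTranspose_smul, Complex.star_def, Complex.conj_ofReal, hB.eq]

lemma contr_lt_one {φ : Mat D →ₗ[ℂ] Mat D}
    (hpos : ∀ M : Mat D, M.PosSemidef → (φ M).PosSemidef)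
    (hker : ∀ M : Mat D, M.PosSemidef → φ M = 0 → M = 0)
    (hstrict : ∀ M : Mat D, M.PosSemidef → M ≠ 0 → (φ M).PosDef) :
    contr φ < 1 := by
  by_cases hD : D = 0
  · subst hD
    have hempty : cset φ = ∅ := by
      ext r
      simp only [cset, Set.mem_setOf_eq, Set.mem_empty_iff_false, iff_false]
      rintro ⟨X, Y, hX, hX1, _⟩
      have : X.trace = 0 := by simp [Matrix.trace]
      rw [this] at hX1
      exact one_ne_zero hX1.symm
    rw [contr_def, hempty, Real.sSup_empty]
    norm_num
  have hDpos : 0 < D := Nat.pos_of_ne_zero hD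
  set S := {X : Mat D | X.PosSemidef ∧ X.trace = 1} with hSdef
  set V := {v : Fin D → ℂ | nsq v = 1} with hVdef
  -- nonemptiness witnesses
  have hX₁psd : ((((D:ℝ)⁻¹ : ℝ) : ℂ) • (1 : Mat D)).PosSemidef :=
    psd_smul Matrix.PosSemidef.one (inv_nonneg.2 (Nat.cast_nonneg D))
  have hX₁tr : ((((D:ℝ)⁻¹ : ℝ) : ℂ) • (1 : Mat D)).trace = 1 := by
    rw [Matrix.trace_smul, Matrix.trace_one, smul_eq_mul]
    simp only [Fintype.card_fin]
    push_cast
    field_simp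
  have hX₁ : ((((D:ℝ)⁻¹ : ℝ) : ℂ) • (1 : Mat D)) ∈ S := ⟨hX₁psd, hX₁tr⟩
  have hv₁ : (Pi.single (⟨0, hDpos⟩ : Fin D) (1:ℂ)) ∈ V := by
    show nsq _ = 1
    rw [nsq]
    rw [Finset.sum_eq_single (⟨0, hDpos⟩ : Fin D)]
    · simp
    · intro k _ hk
      simp [Pi.single_apply, hk]
    · simp
  -- minimum of the quadratic form over S × V
  obtain ⟨p₀, hp₀, hminp'⟩ := (isCompact_S.prod isCompact_V).exists_isMinOn
    ⟨(_, _), Set.mk_mem_prod hX₁ hv₁⟩ (continuous_f φ).continuousOn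
  have hminp : ∀ y ∈ S ×ˢ V, (Q (φ p₀.1) p₀.2).re ≤ (Q (φ y.1) y.2).re :=
    fun y hy => hminp' hy
  set δ := (Q (φ p₀.1) p₀.2).re with hδdef
  have hδpos : 0 < δ := by
    have hX₀ := (hp₀.1 : p₀.1 ∈ S)
    have hv₀ := (hp₀.2 : p₀.2 ∈ V)
    have hX₀ne : p₀.1 ≠ 0 := trace_one_ne_zero hX₀.2
    have hPD := hstrict p₀.1 hX₀.1 hX₀ne
    have hv₀ne : p₀.2 ≠ 0 := by
      intro h
      have h1 : nsq (0 : Fin D → ℂ) = 1 := by rw [← h]; exact hv₀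
      rw [nsq] at h1
      simp at h1
    have := hPD.dotProduct_mulVec_pos hv₀ne
    rw [Complex.pos_iff] at this
    exact this.1
  -- maximum of the trace over S
  obtain ⟨Xt, hXt, hmaxt⟩ := isCompact_S.exists_isMaxOn ⟨_, hX₁⟩
    ((Complex.continuous_re.comp (continuous_trace'.comp
      (φ.continuous_of_finiteDimensional : Continuous fun X : Mat D => φ X))).continuousOn)
  set T := ((φ Xt).trace).re with hTdef
  have hT : ∀ X ∈ S, ((φ X).trace).re ≤ T := fun X hX => hmaxt hX
  have hTpos : 0 < T := by
    have h1 : φ (((((D:ℝ)⁻¹ : ℝ)) : ℂ) • (1 : Mat D)) ≠ 0 :=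
      fun h => trace_one_ne_zero hX₁tr (hker _ hX₁psd h)
    exact lt_of_lt_of_le (trace_re_pos (hpos _ hX₁psd) h1) (hT _ hX₁)
  set lam := min (δ/T) 1 with hlamdef
  have hlam0 : 0 < lam := lt_min (div_pos hδpos hTpos) one_pos
  have hlam1 : lam ≤ 1 := min_le_right _ _
  have hlamdT : lam ≤ δ/T := min_le_left _ _
  -- lower bound for the quadratic form of φ X
  have hlow : ∀ X ∈ S, ∀ v : Fin D → ℂ, δ * nsq v ≤ (Q (φ X) v).re := by
    intro X hX v
    by_cases hv : v = 0
    · subst hv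
      have h1 : Q (φ X) 0 = 0 := by simp [Q]
      have h2 : nsq (0 : Fin D → ℂ) = 0 := by simp [nsq]
      rw [h1, h2]
      simp
    · have hnsqpos : 0 < nsq v := by
        rcases lt_or_eq_of_le (nsq_nonneg v) with h | h
        · exact h
        · exact absurd (nsq_eq_zero h.symm) hv
      set s := Real.sqrt (nsq v) with hsdef
      have hs2 : s^2 = nsq v := Real.sq_sqrt (nsq_nonneg v)
      have hspos : 0 < s := Real.sqrt_pos.2 hnsqpos
      set u := ((s⁻¹ : ℝ) : ℂ) • v with hudef
      have hu : nsq u = 1 := by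
        rw [hudef, nsq_smul, ← hs2]
        field_simp
      have hδu : δ ≤ (Q (φ X) u).re := hminp (X, u) (Set.mk_mem_prod hX hu)
      have hQu : (Q (φ X) u).re = (s⁻¹ * s⁻¹) * (Q (φ X) v).re := by
        rw [hudef, Q_smul_vec, Complex.star_def, Complex.conj_ofReal, ← Complex.ofReal_mul,
          re_ofReal_mul']
      rw [hQu] at hδu
      have : δ * nsq v ≤ (s⁻¹ * s⁻¹ * (Q (φ X) v).re) * nsq v := by
        nlinarith [nsq_nonneg v]
      calc δ * nsq v ≤ (s⁻¹ * s⁻¹ * (Q (φ X) v).re) * nsq v := this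
      _ = (Q (φ X) v).re := by
        have hs' : s ≠ 0 := ne_of_gt hspos
        rw [← hs2, pow_two,
          show s⁻¹ * s⁻¹ * (Q (φ X) v).re * (s * s)
            = (s⁻¹ * s) * ((s⁻¹ * s) * (Q (φ X) v).re) by ring,
          inv_mul_cancel₀ hs']
        ring
  -- lower bound for the projective action
  have hlow2 : ∀ X ∈ S, ∀ v : Fin D → ℂ, (δ/T) * nsq v ≤ (Q (projAct φ X) v).re := by
    intro X hX v
    have hφX0 : φ X ≠ 0 := fun h => trace_one_ne_zero hX.2 (hker X hX.1 h)
    obtain ⟨hApsd, hAtr, hAeq⟩ := projAct_spec (hpos X hX.1) hφX0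
    have ht := trace_re_pos (hpos X hX.1) hφX0
    have htT := hT X hX
    have hQA : (Q (projAct φ X) v).re = ((φ X).trace.re)⁻¹ * (Q (φ X) v).re := by
      rw [hAeq, Q_smul, re_ofReal_mul']
    rw [hQA]
    have h1 := hlow X hX v
    have h2 : (T)⁻¹ * (Q (φ X) v).re ≤ ((φ X).trace.re)⁻¹ * (Q (φ X) v).re := by
      apply mul_le_mul_of_nonneg_right (by
        apply inv_anti₀ ht htT) (le_trans (mul_nonneg hδpos.le (nsq_nonneg v)) h1)
    calc (δ/T) * nsq v = T⁻¹ * (δ * nsq v) := by ring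
    _ ≤ T⁻¹ * (Q (φ X) v).re := by
        apply mul_le_mul_of_nonneg_left h1 (inv_nonneg.2 hTpos.le)
    _ ≤ _ := h2
  -- lam is in the mset for any pair
  have hmem : ∀ X ∈ S, ∀ Y ∈ S, lam ∈ mset (projAct φ X) (projAct φ Y) := by
    intro X hX Y hY
    have hφX0 : φ X ≠ 0 := fun h => trace_one_ne_zero hX.2 (hker X hX.1 h)
    have hφY0 : φ Y ≠ 0 := fun h => trace_one_ne_zero hY.2 (hker Y hY.1 h)
    obtain ⟨hApsd, hAtr, _⟩ := projAct_spec (hpos X hX.1) hφX0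
    obtain ⟨hBpsd, hBtr, _⟩ := projAct_spec (hpos Y hY.1) hφY0
    show ((projAct φ X) - lam • (projAct φ Y)).PosSemidef
    rw [psd_iff]
    constructor
    · exact hApsd.1.sub (herm_real_smul hBpsd.1 lam)
    · intro v
      have heq : projAct φ X - lam • projAct φ Y
          = projAct φ X - ((lam:ℝ):ℂ) • projAct φ Y := by rw [real_smul_eq]
      rw [heq, Q_sub, Q_smul]
      rw [Complex.sub_re, re_ofReal_mul']
      have h1 := hlow2 X hX v
      have h2 : (Q (projAct φ Y) v).re ≤ nsq v := by
        have := Q_le_trace_nsq hBpsd v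
        rw [hBtr] at this
        simpa using this
      have h3 : 0 ≤ (Q (projAct φ Y) v).re := Q_re_nonneg hBpsd v
      have h4 : lam * (Q (projAct φ Y) v).re ≤ lam * nsq v :=
        mul_le_mul_of_nonneg_left h2 hlam0.le
      have h5 : lam * nsq v ≤ (δ/T) * nsq v :=
        mul_le_mul_of_nonneg_right hlamdT (nsq_nonneg v)
      linarith
  -- bound every element of cset
  have hbound : ∀ r ∈ cset φ, r ≤ (1 - lam^2)/(1 + lam^2) := by
    rintro r ⟨X, Y, hX, hX1, hY, hY1, rfl⟩
    have hXS : X ∈ S := ⟨hX, hX1⟩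
    have hYS : Y ∈ S := ⟨hY, hY1⟩
    have hφX0 : φ X ≠ 0 := fun h => trace_one_ne_zero hX1 (hker X hX h)
    have hφY0 : φ Y ≠ 0 := fun h => trace_one_ne_zero hY1 (hker Y hY h)
    obtain ⟨hApsd, hAtr, _⟩ := projAct_spec (hpos X hX) hφX0
    obtain ⟨hBpsd, hBtr, _⟩ := projAct_spec (hpos Y hY) hφY0
    have hAne : projAct φ X ≠ 0 := trace_one_ne_zero hAtr
    have hBne : projAct φ Y ≠ 0 := trace_one_ne_zero hBtr
    obtain ⟨vB, hvB⟩ := exists_Q_pos hBpsd hBne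
    obtain ⟨vA, hvA⟩ := exists_Q_pos hApsd hAne
    have hbddAB : BddAbove (mset (projAct φ X) (projAct φ Y)) := mset_bddAbove hvB
    have hbddBA : BddAbove (mset (projAct φ Y) (projAct φ X)) := mset_bddAbove hvA
    have hm1 : lam ≤ mfun (projAct φ X) (projAct φ Y) :=
      le_mfun hbddAB (hmem X hXS Y hYS)
    have hm2 : lam ≤ mfun (projAct φ Y) (projAct φ X) :=
      le_mfun hbddBA (hmem Y hYS X hXS)
    have ht : lam^2 ≤ mfun (projAct φ X) (projAct φ Y) * mfun (projAct φ Y) (projAct φ X) := by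
      have := mul_le_mul hm1 hm2 hlam0.le (le_trans hlam0.le hm1)
      nlinarith
    rw [dfun]
    rw [div_le_div_iff₀ (by nlinarith) (by positivity)]
    nlinarith
  have hfinal : contr φ ≤ (1 - lam^2)/(1 + lam^2) := by
    refine Real.sSup_le hbound (div_nonneg (by nlinarith) (by positivity))
  calc contr φ ≤ (1 - lam^2)/(1 + lam^2) := hfinal
  _ < 1 := by
    rw [div_lt_one (by positivity)]
    nlinarith

end Stmt15Aux


theorem stmt15 {D : ℕ}
    (φ φs : Matrix (Fin D) (Fin D) ℂ →ₗ[ℂ] Matrix (Fin D) (Fin D) ℂ)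
    (hadj : ∀ A B : Matrix (Fin D) (Fin D) ℂ, (Aᴴ * φ B).trace = ((φs A)ᴴ * B).trace)
    (hpos : ∀ M : Matrix (Fin D) (Fin D) ℂ, M.PosSemidef → (φ M).PosSemidef)
    (hker : ∀ M : Matrix (Fin D) (Fin D) ℂ, M.PosSemidef → φ M = 0 → M = 0)
    (hkers : ∀ M : Matrix (Fin D) (Fin D) ℂ, M.PosSemidef → φs M = 0 → M = 0) :
    contr φ ≤ 1 ∧
      (contr φ < 1 ↔ ∀ M : Matrix (Fin D) (Fin D) ℂ, M.PosSemidef → M ≠ 0 → (φ M).PosDef) := by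
  refine ⟨Stmt15Aux.contr_le_one hpos hker, ?_, fun hstrict => Stmt15Aux.contr_lt_one hpos hker hstrict⟩
  intro hlt M hM hM0
  by_contra hnd
  have h1 : (1:ℝ) ∈ Stmt15Aux.cset φ :=
    Stmt15Aux.one_mem_cset hadj hpos hker hkers hM hM0 hnd
  have hbdd : BddAbove (Stmt15Aux.cset φ) :=
    ⟨1, fun r hr => Stmt15Aux.cset_le_one hpos hker r hr⟩
  have h2 := le_csSup hbdd h1
  rw [← Stmt15Aux.contr_def] at h2
  linarith
end
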